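/- arXiv:2505.08065 — 5 statements merged into one kernel-verified Lean document; each statement's English description precedes it below -/
import Mathlib

section
/- Let (Ω, F, P) be a probability space, D ≥ 1 an integer, ψ₀ ∈ ℝ^D, and Σ a positive semidefinite D×D real matrix. Let ψ_n : Ω → ℝ^D be a sequence of random vectors such that √n(ψ_n − ψ₀) converges in distribution to N(0, Σ), and let γ_n : Ω → [0, ∞) be random variables converging in probability to a finite constant γ_∞ ≥ 0. Set λ_n* = γ_n/n and ψ̃_n = ψ_n/(1 + λ_n*). Then √n(ψ̃_n − ψ₀) converges in distribution to N(0, Σ). -/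
open MeasureTheory ProbabilityTheory Filter Set
open scoped Topology ENNReal NNReal

/-- The centered multivariate Gaussian measure `N(0, Σ)` on `ℝ^D` with positive semidefinite
covariance matrix `Σ`, realized as the pushforward of a product of `D` independent standard
Gaussians under multiplication by the positive semidefinite square root of `Σ`. -/
noncomputable def multivariateGaussian {D : ℕ} {S : Matrix (Fin D) (Fin D) ℝ}
    (hS : S.PosSemidef) : Measure (Fin D → ℝ) :=
  Measure.map (fun x => (hS.1.eigenvectorUnitary.1 *
      Matrix.diagonal (RCLike.ofReal ∘ Real.sqrt ∘ hS.1.eigenvalues : Fin D → ℝ) *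
      (star hS.1.eigenvectorUnitary : Matrix (Fin D) (Fin D) ℝ)).mulVec x) (Measure.pi fun _ : Fin D => gaussianReal 0 1)

/-- A sequence of random vectors `X_n : Ω → E` converges in distribution (under `P`) to a
measure `ν` on `E` if the pushforward laws converge weakly, i.e. the integrals of every bounded
continuous function converge. -/
def TendstoInDistribution {Ω E : Type*} [MeasurableSpace Ω] [MeasurableSpace E]
    [TopologicalSpace E] (P : Measure Ω) (X : ℕ → Ω → E) (ν : Measure E) : Prop :=
  ∀ f : BoundedContinuousFunction E ℝ,
    Tendsto (fun n => ∫ ω, f (X n ω) ∂P) atTop (𝓝 (∫ x, f x ∂ν))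

/-- A sequence of random vectors `X_n : Ω → E` converges in probability (under `P`) to the
constant `c` if `P(‖X_n − c‖ > ε) → 0` for every `ε > 0`. -/
def TendstoInProbability {Ω E : Type*} [MeasurableSpace Ω] [NormedAddCommGroup E]
    (P : Measure Ω) (X : ℕ → Ω → E) (c : E) : Prop :=
  ∀ ε : ℝ, 0 < ε → Tendsto (fun n => P {ω | ε < ‖X n ω - c‖}) atTop (𝓝 0)

section Aux
variable {Ω E : Type*} [MeasurableSpace Ω] [MeasurableSpace E]

noncomputable def myLaw (P : Measure Ω) [IsProbabilityMeasure P] {X : Ω → E} (hX : Measurable X) :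
    ProbabilityMeasure E := ⟨P.map X, Measure.isProbabilityMeasure_map hX.aemeasurable⟩

lemma tendstoInDistribution_iff_tendsto_law [TopologicalSpace E] [OpensMeasurableSpace E]
    (P : Measure Ω) [IsProbabilityMeasure P] {X : ℕ → Ω → E} (hX : ∀ n, Measurable (X n))
    (ν : ProbabilityMeasure E) :
    TendstoInDistribution P X ↑ν ↔ Tendsto (fun n => myLaw P (hX n)) atTop (𝓝 ν) := by
  rw [ProbabilityMeasure.tendsto_iff_forall_integral_tendsto]
  refine forall_congr' fun f => ?_
  have h : ∀ n, ∫ ω, f (X n ω) ∂P = ∫ x, f x ∂(myLaw P (hX n) : Measure E) := fun n =>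
    (integral_map (hX n).aemeasurable f.continuous.aestronglyMeasurable).symm
  exact tendsto_congr fun n => h n

lemma coe_liminf_of_le_one (f : ℕ → ℝ≥0) (hf : ∀ n, f n ≤ 1) :
    (↑(liminf f atTop) : ℝ≥0∞) = liminf (fun n => (f n : ℝ≥0∞)) atTop := by
  refine Monotone.map_liminf_of_continuousAt (F := atTop) ENNReal.coe_mono f
    ENNReal.continuous_coe.continuousAt ?_ ?_
  · exact IsBoundedUnder.isCoboundedUnder_ge ⟨1, Filter.eventually_map.2 (.of_forall hf)⟩
  · exact ⟨0, Filter.eventually_map.2 (.of_forall fun n => zero_le)⟩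
end Aux

section Slutsky
variable {Ω E : Type*} [MeasurableSpace Ω] [MeasurableSpace E] [NormedAddCommGroup E]
  [BorelSpace E]

lemma slutsky (P : Measure Ω) [IsProbabilityMeasure P]
    {X W : ℕ → Ω → E} (hX : ∀ n, Measurable (X n)) (hW : ∀ n, Measurable (W n))
    {ν : Measure E} [IsProbabilityMeasure ν]
    (hdist : TendstoInDistribution P X ν)
    (hprob : ∀ ε : ℝ, 0 < ε → Tendsto (fun n => P {ω | ε < ‖W n ω - X n ω‖}) atTop (𝓝 0)) :
    TendstoInDistribution P W ν := by
  classical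
  set νP : ProbabilityMeasure E := ⟨ν, inferInstance⟩ with hνP
  have hν : (νP : Measure E) = ν := rfl
  have hXlaw : Tendsto (fun n => myLaw P (hX n)) atTop (𝓝 νP) := by
    rw [← tendstoInDistribution_iff_tendsto_law P hX νP]; exact hdist
  refine (tendstoInDistribution_iff_tendsto_law P hW νP).mpr ?_
  apply tendsto_of_forall_isOpen_le_liminf
  intro G hG
  -- main ENNReal claim
  have key : ν G ≤ liminf (fun n => P.map (W n) G) atTop := by
    set L := liminf (fun n => P.map (W n) G) atTop with hL
    set A : ℕ → Set E := fun k => (Metric.cthickening ((k : ℝ) + 1)⁻¹ Gᶜ)ᶜ with hA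
    have A_open : ∀ k, IsOpen (A k) := fun k =>
      (Metric.isClosed_cthickening).isOpen_compl
    have A_mono : Monotone A := by
      intro j k hjk
      apply Set.compl_subset_compl.2
      apply Metric.cthickening_mono
      apply inv_anti₀ (by positivity)
      have := (Nat.cast_le (α := ℝ)).2 hjk
      linarith
    have A_sub : ∀ k, A k ⊆ G := fun k => by
      rw [← compl_compl G]
      exact Set.compl_subset_compl.2 (Metric.self_subset_cthickening _)
    have A_union : (⋃ k, A k) = G := by
      apply Set.Subset.antisymm (Set.iUnion_subset A_sub)
      intro x hx
      have hx' : x ∉ closure Gᶜ := by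
        rw [hG.isClosed_compl.closure_eq]
        simpa using hx
      have hpos : EMetric.infEdist x Gᶜ ≠ 0 := fun h =>
        hx' (EMetric.mem_closure_iff_infEdist_zero.2 h)
      obtain ⟨k, hk⟩ := ENNReal.exists_inv_nat_lt hpos
      refine Set.mem_iUnion.2 ⟨k, ?_⟩
      intro hmem
      rw [Metric.mem_cthickening_iff] at hmem
      have h1 : ENNReal.ofReal ((k : ℝ) + 1)⁻¹ ≤ ((k : ℕ) : ℝ≥0∞)⁻¹ := by
        rw [ENNReal.ofReal_inv_of_pos (by positivity),
          ENNReal.ofReal_add (by positivity) zero_le_one, ENNReal.ofReal_natCast,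
          ENNReal.ofReal_one]
        exact ENNReal.inv_le_inv.2 (le_add_of_nonneg_right zero_le_one)
      exact absurd (hmem.trans h1) (not_le.2 hk)
    have A_key : ∀ k, ν (A k) ≤ L := by
      intro k
      have hεk : (0 : ℝ) < ((k : ℝ) + 1)⁻¹ := by positivity
      set b : ℕ → ℝ≥0∞ := fun n => P {ω | ((k : ℝ) + 1)⁻¹ < ‖W n ω - X n ω‖} with hb
      have hb0 : Tendsto b atTop (𝓝 0) := hprob _ hεk
      have step1 : ν (A k) ≤ liminf (fun n => P.map (X n) (A k)) atTop := by
        have := ProbabilityMeasure.le_liminf_measure_open_of_tendsto hXlaw (A_open k)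
        convert this using 2
        all_goals rfl
      have step2 : ∀ n, P.map (X n) (A k) ≤ P.map (W n) G + b n := by
        intro n
        rw [Measure.map_apply (hX n) (A_open k).measurableSet,
          Measure.map_apply (hW n) hG.measurableSet]
        refine le_trans (measure_mono ?_) (measure_union_le _ _)
        intro ω hω
        by_cases hw : W n ω ∈ G
        · exact Or.inl hw
        · refine Or.inr ?_
          by_contra hcon
          simp only [Set.mem_setOf_eq, not_lt] at hcon
          apply hω
          refine Metric.mem_cthickening_of_dist_le (X n ω) (W n ω) _ _ hw ?_
          rw [dist_eq_norm, norm_sub_rev]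
          exact hcon
      refine step1.trans ?_
      apply ENNReal.le_of_forall_pos_le_add
      intro δ hδ _
      have hev : ∀ᶠ n in atTop, P.map (X n) (A k) ≤ P.map (W n) G + (δ : ℝ≥0∞) := by
        filter_upwards [hb0.eventually_le_const
          (show (0:ℝ≥0∞) < δ from ENNReal.coe_pos.2 hδ)] with n hn
        exact (step2 n).trans (add_le_add_right hn _)
      calc liminf (fun n => P.map (X n) (A k)) atTop
          ≤ liminf (fun n => P.map (W n) G + (δ : ℝ≥0∞)) atTop := liminf_le_liminf hev
        _ = L + δ := liminf_add_const atTop _ _ (by isBoundedDefault) (by isBoundedDefault)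
    calc ν G = ν (⋃ k, A k) := by rw [A_union]
      _ = ⨆ k, ν (A k) := Directed.measure_iUnion (A_mono.directed_le)
      _ ≤ L := iSup_le A_key
  -- convert to NNReal
  have h1 : (↑(νP G) : ℝ≥0∞) = ν G := ProbabilityMeasure.ennreal_coeFn_eq_coeFn_toMeasure νP G
  have h2 : ∀ n, (↑(myLaw P (hW n) G) : ℝ≥0∞) = P.map (W n) G := fun n =>
    ProbabilityMeasure.ennreal_coeFn_eq_coeFn_toMeasure _ G
  rw [← ENNReal.coe_le_coe, h1, coe_liminf_of_le_one _ (fun n => ProbabilityMeasure.apply_le_one _ _)]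
  · simp_rw [h2]; exact key
end Slutsky

section Tight
variable {Ω E : Type*} [MeasurableSpace Ω] [MeasurableSpace E] [NormedAddCommGroup E]
  [BorelSpace E]

lemma tight_of_tendstoInDistribution (P : Measure Ω) [IsProbabilityMeasure P]
    {X : ℕ → Ω → E} (hX : ∀ n, Measurable (X n)) {ν : Measure E} [IsProbabilityMeasure ν]
    (hdist : TendstoInDistribution P X ν) (η : ℝ≥0∞) (hη : 0 < η) :
    ∃ M : ℝ, 0 < M ∧ ∀ᶠ n in atTop, P {ω | M ≤ ‖X n ω‖} ≤ η := by
  set νP : ProbabilityMeasure E := ⟨ν, inferInstance⟩ with hνP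
  have hXlaw : Tendsto (fun n => myLaw P (hX n)) atTop (𝓝 νP) := by
    rw [← tendstoInDistribution_iff_tendsto_law P hX νP]; exact hdist
  set η' := min η 2⁻¹ with hη'
  have hη'pos : 0 < η' := lt_min hη (by norm_num)
  have hη'le : η' ≤ η := min_le_left _ _
  have hη'lt1 : η' ≤ 1 := (min_le_right _ _).trans (by norm_num)
  have hη'ne : η' ≠ ⊤ := ne_top_of_le_ne_top (by norm_num) (min_le_right _ _)
  -- find radius
  set C : ℕ → Set E := fun j => (Metric.ball (0 : E) j)ᶜ with hC
  have hCmeas : ∀ j, NullMeasurableSet (C j) ν :=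
    fun j => (Metric.isOpen_ball.isClosed_compl.measurableSet).nullMeasurableSet
  have hCanti : Antitone C := fun i j hij =>
    Set.compl_subset_compl.2 (Metric.ball_subset_ball (by exact_mod_cast hij))
  have hCempty : (⋂ j, C j) = ∅ := by
    ext x
    simp only [Set.mem_iInter, Set.mem_empty_iff_false, iff_false, not_forall, hC,
      Set.mem_compl_iff, not_not, Metric.mem_ball, dist_zero_right]
    exact exists_nat_gt ‖x‖
  have htend : Tendsto (fun j => ν (C j)) atTop (𝓝 0) := by
    have := tendsto_measure_iInter_atTop (μ := ν) hCmeas hCanti ⟨0, measure_ne_top _ _⟩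
    rwa [hCempty, measure_empty] at this
  obtain ⟨j, hj⟩ := (htend.eventually_lt_const hη'pos).exists
  set M : ℝ := (j : ℝ) + 1 with hM
  have hMpos : 0 < M := by positivity
  set B : Set E := Metric.ball (0 : E) M with hB
  have hBC : Bᶜ ⊆ C j := by
    apply Set.compl_subset_compl.2
    exact Metric.ball_subset_ball (by simp [hM])
  have hνBc : ν Bᶜ < η' := lt_of_le_of_lt (measure_mono hBC) hj
  have hliminf : ν B ≤ liminf (fun n => P.map (X n) B) atTop := by
    have := ProbabilityMeasure.le_liminf_measure_open_of_tendsto hXlaw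
      (Metric.isOpen_ball (x := (0:E)) (ε := M))
    convert this using 2
    all_goals rfl
  have hone : (1 : ℝ≥0∞) < ν B + η' := by
    have h := measure_add_measure_compl (μ := ν) (Metric.isOpen_ball (x := (0:E)) (ε := M)).measurableSet
    rw [measure_univ] at h
    calc (1 : ℝ≥0∞) = ν B + ν Bᶜ := h.symm
      _ < ν B + η' := ENNReal.add_lt_add_left (measure_ne_top _ _) hνBc
  have hlt : (1 : ℝ≥0∞) - η' < liminf (fun n => P.map (X n) B) atTop := by
    refine lt_of_lt_of_le ?_ hliminf
    rw [ENNReal.sub_lt_iff_lt_right hη'ne hη'lt1]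
    exact hone
  refine ⟨M, hMpos, ?_⟩
  filter_upwards [eventually_lt_of_lt_liminf hlt] with n hn
  have hps : P.map (X n) B = P (X n ⁻¹' B) :=
    Measure.map_apply (hX n) Metric.isOpen_ball.measurableSet
  have hsub : {ω | M ≤ ‖X n ω‖} ⊆ (X n ⁻¹' B)ᶜ := by
    intro ω hω
    simp only [Set.mem_compl_iff, Set.mem_preimage, hB, Metric.mem_ball, dist_zero_right, not_lt]
    exact hω
  refine le_trans (measure_mono hsub) (le_trans ?_ hη'le)
  have hsum := measure_add_measure_compl (μ := P) (s := X n ⁻¹' B)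
    ((hX n) Metric.isOpen_ball.measurableSet)
  rw [measure_univ] at hsum
  have h1 : P (X n ⁻¹' B) + P (X n ⁻¹' B)ᶜ ≤ P (X n ⁻¹' B) + η' := by
    rw [hsum, ← tsub_add_cancel_of_le hη'lt1]
    have : (1 : ℝ≥0∞) - η' ≤ P (X n ⁻¹' B) := by rw [← hps]; exact hn.le
    exact add_le_add_left this _
  exact (ENNReal.add_le_add_iff_left (measure_ne_top _ _)).1 h1
end Tight

set_option maxHeartbeats 2000000 in
/-- Theorem 4.4: if `√n(ψ_n − ψ₀) →d N(0, Σ)` and `γ_n →p γ_∞ ∈ [0, ∞)`, then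
with `λ_n* = γ_n/n` and `ψ̃_n = ψ_n/(1 + λ_n*)`, also `√n(ψ̃_n − ψ₀) →d N(0, Σ)`. -/
theorem l2_penalized_estimator_asymptotically_normal_efficient
    {Ω : Type*} [MeasurableSpace Ω] (P : Measure Ω) [IsProbabilityMeasure P]
    (D : ℕ) (hD : 1 ≤ D) (ψ₀ : Fin D → ℝ)
    (S : Matrix (Fin D) (Fin D) ℝ) (hS : S.PosSemidef)
    (ψn : ℕ → Ω → Fin D → ℝ) (hψmeas : ∀ n, Measurable (ψn n))
    (γn : ℕ → Ω → ℝ) (hγmeas : ∀ n, Measurable (γn n)) (hγnonneg : ∀ n ω, 0 ≤ γn n ω)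
    (γlim : ℝ) (hγlim : 0 ≤ γlim)
    (hdist : TendstoInDistribution P
      (fun n ω => Real.sqrt n • (ψn n ω - ψ₀)) (multivariateGaussian hS))
    (hγprob : TendstoInProbability P γn γlim) :
    TendstoInDistribution P
      (fun n ω => Real.sqrt n • ((1 + γn n ω / n)⁻¹ • ψn n ω - ψ₀))
      (multivariateGaussian hS) := by
  have hν : IsProbabilityMeasure (multivariateGaussian hS) := by
    have hcont : Continuous fun x : Fin D → ℝ => ((hS.1.eigenvectorUnitary.1 *
      Matrix.diagonal (RCLike.ofReal ∘ Real.sqrt ∘ hS.1.eigenvalues : Fin D → ℝ) *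
      (star hS.1.eigenvectorUnitary : Matrix (Fin D) (Fin D) ℝ))).mulVec x := by
      have := LinearMap.continuous_of_finiteDimensional (𝕜 := ℝ) ((hS.1.eigenvectorUnitary.1 *
      Matrix.diagonal (RCLike.ofReal ∘ Real.sqrt ∘ hS.1.eigenvalues : Fin D → ℝ) *
      (star hS.1.eigenvectorUnitary : Matrix (Fin D) (Fin D) ℝ))).mulVecLin
      exact this
    exact Measure.isProbabilityMeasure_map hcont.measurable.aemeasurable
  set Z : ℕ → Ω → (Fin D → ℝ) := fun n ω => Real.sqrt n • (ψn n ω - ψ₀) with hZdef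
  set W : ℕ → Ω → (Fin D → ℝ) :=
    fun n ω => Real.sqrt n • ((1 + γn n ω / n)⁻¹ • ψn n ω - ψ₀) with hWdef
  have hZmeas : ∀ n, Measurable (Z n) := fun n => by
    show Measurable fun ω => Real.sqrt n • (ψn n ω - ψ₀)
    fun_prop
  have hWmeas : ∀ n, Measurable (W n) := by
    intro n
    have h1 : Measurable fun ω => (1 + γn n ω / (n : ℝ))⁻¹ :=
      (measurable_const.add ((hγmeas n).div_const _)).inv
    show Measurable fun ω => Real.sqrt n • ((1 + γn n ω / n)⁻¹ • ψn n ω - ψ₀)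
    fun_prop
  -- pointwise bound
  have hbound : ∀ n : ℕ, 1 ≤ n → ∀ ω, ‖W n ω - Z n ω‖ ≤
      (γn n ω / Real.sqrt n) * (‖ψ₀‖ + ‖Z n ω‖) := by
    intro n hn ω
    set s : ℝ := Real.sqrt n with hs
    have hn1 : (1 : ℝ) ≤ n := by exact_mod_cast hn
    have hs1 : 1 ≤ s := Real.one_le_sqrt.2 hn1
    have hs0 : 0 < s := by linarith
    have hss : s * s = n := Real.mul_self_sqrt (by positivity)
    have hsn : s ≤ n := by nlinarith
    have hg0 : 0 ≤ γn n ω := hγnonneg n ω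
    set g : ℝ := γn n ω with hg
    set lam : ℝ := g / n with hlam
    have hlam0 : 0 ≤ lam := by positivity
    have h1lam : 0 < 1 + lam := by linarith
    set c : ℝ := (1 + lam)⁻¹ with hc
    have hc0 : 0 < c := by positivity
    have hc1 : c ≤ 1 := by
      rw [hc, inv_le_one_iff₀]
      right; linarith
    have h1mc : 1 - c ≤ lam := by
      have hcc : 1 - c = lam * c := by
        rw [hc]
        field_simp
        ring
      rw [hcc]
      calc lam * c ≤ lam * 1 := by nlinarith
        _ = lam := mul_one lam
    have hid : W n ω - Z n ω = (s * (c - 1)) • ψ₀ + (c - 1) • Z n ω := by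
      simp only [hWdef, hZdef, hc, hlam, hg, hs]
      module
    have hWZ : ‖W n ω - Z n ω‖ ≤ s * (1 - c) * ‖ψ₀‖ + (1 - c) * ‖Z n ω‖ := by
      rw [hid]
      refine (norm_add_le _ _).trans ?_
      rw [norm_smul, norm_smul, Real.norm_eq_abs, Real.norm_eq_abs]
      have habs : |c - 1| = 1 - c := by rw [abs_of_nonpos (by linarith)]; ring
      rw [abs_mul, habs, abs_of_pos hs0]
    have key1 : s * (1 - c) ≤ g / s := by
      have h2 : s * lam = g / s := by
        rw [hlam]
        rw [eq_div_iff hs0.ne']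
        field_simp
        nlinarith [hss]
      nlinarith [h1mc, hs0]
    have key2 : 1 - c ≤ g / s := by
      refine h1mc.trans ?_
      rw [hlam]
      exact div_le_div_of_nonneg_left hg0 hs0 hsn
    calc ‖W n ω - Z n ω‖ ≤ s * (1 - c) * ‖ψ₀‖ + (1 - c) * ‖Z n ω‖ := hWZ
      _ ≤ (g / s) * ‖ψ₀‖ + (g / s) * ‖Z n ω‖ :=
          add_le_add (mul_le_mul_of_nonneg_right key1 (norm_nonneg _))
            (mul_le_mul_of_nonneg_right key2 (norm_nonneg _))
      _ = (g / s) * (‖ψ₀‖ + ‖Z n ω‖) := by ring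
  -- convergence in probability of the difference
  have hprobWZ : ∀ ε : ℝ, 0 < ε →
      Tendsto (fun n => P {ω | ε < ‖W n ω - Z n ω‖}) atTop (𝓝 0) := by
    intro ε hε
    rw [ENNReal.tendsto_atTop_zero]
    intro η hη
    obtain ⟨M, hM, hMev⟩ := tight_of_tendstoInDistribution P hZmeas hdist (η / 2)
      (ENNReal.half_pos hη.ne')
    set δ : ℝ := ε / (‖ψ₀‖ + M + 1) with hδ
    have hδ0 : 0 < δ := by positivity
    set N₀ : ℕ := ⌈((γlim + 1) / δ) ^ 2⌉₊ with hN₀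
    have hγev : ∀ᶠ n in atTop, P {ω | 1 < ‖γn n ω - γlim‖} ≤ η / 2 :=
      (hγprob 1 one_pos).eventually_le_const (ENNReal.half_pos hη.ne')
    have hkey : ∀ᶠ n in atTop, P {ω | ε < ‖W n ω - Z n ω‖} ≤ η := by
      filter_upwards [hMev, hγev, eventually_ge_atTop (max N₀ 1)] with n h1 h2 h3
      have hn1 : 1 ≤ n := le_trans (le_max_right _ _) h3
      have hnN : N₀ ≤ n := le_trans (le_max_left _ _) h3
      have hs0 : (0 : ℝ) < Real.sqrt n :=
        Real.sqrt_pos.2 (by exact_mod_cast Nat.lt_of_lt_of_le zero_lt_one hn1)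
      have hsq : γlim + 1 ≤ δ * Real.sqrt n := by
        have h4 : ((γlim + 1) / δ) ^ 2 ≤ (n : ℝ) :=
          le_trans (Nat.le_ceil _) (by exact_mod_cast hnN)
        have h5 : (γlim + 1) / δ ≤ Real.sqrt n := by
          rw [show (γlim + 1) / δ = Real.sqrt (((γlim + 1) / δ) ^ 2) from
            (Real.sqrt_sq (by positivity)).symm]
          exact Real.sqrt_le_sqrt h4
        calc γlim + 1 = δ * ((γlim + 1) / δ) := by field_simp
          _ ≤ δ * Real.sqrt n := by nlinarith [h5, hδ0]
      have hsub : {ω | ε < ‖W n ω - Z n ω‖} ⊆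
          {ω | 1 < ‖γn n ω - γlim‖} ∪ {ω | M ≤ ‖Z n ω‖} := by
        intro ω hω
        simp only [Set.mem_setOf_eq] at hω
        by_contra hcon
        simp only [Set.mem_union, Set.mem_setOf_eq, not_or, not_lt, not_le] at hcon
        obtain ⟨hγsmall, hZsmall⟩ := hcon
        have hγbd : γn n ω ≤ γlim + 1 := by
          have := abs_le.1 (by simpa [Real.norm_eq_abs] using hγsmall)
          linarith [this.2]
        have hratio : γn n ω / Real.sqrt n ≤ δ := by
          rw [div_le_iff₀ hs0]
          exact hγbd.trans hsq
        have hBle : (γn n ω / Real.sqrt n) * (‖ψ₀‖ + ‖Z n ω‖) ≤ δ * (‖ψ₀‖ + M) := by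
          apply mul_le_mul hratio ?_ ?_ hδ0.le
          · linarith [hZsmall]
          · positivity
        have hδM : δ * (‖ψ₀‖ + M) ≤ ε := by
          rw [hδ, div_mul_eq_mul_div, div_le_iff₀ (by positivity)]
          nlinarith [hε, norm_nonneg ψ₀, hM]
        have hle : ‖W n ω - Z n ω‖ ≤ ε := le_trans (hbound n hn1 ω) (le_trans hBle hδM)
        exact absurd hω (not_lt.2 hle)
      calc P {ω | ε < ‖W n ω - Z n ω‖}
          ≤ P ({ω | 1 < ‖γn n ω - γlim‖} ∪ {ω | M ≤ ‖Z n ω‖}) := measure_mono hsub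
        _ ≤ P {ω | 1 < ‖γn n ω - γlim‖} + P {ω | M ≤ ‖Z n ω‖} := measure_union_le _ _
        _ ≤ η / 2 + η / 2 := add_le_add h2 h1
        _ = η := ENNReal.add_halves η
    exact eventually_atTop.1 hkey
  exact slutsky P hZmeas hWmeas hdist hprobWZ
end

section
/- Let (Ω, F, P) be a probability space, D ≥ 1 an integer, ψ₀ ∈ ℝ^D and σ²₀ ∈ (0, ∞)^D. Let ψ_n : Ω → ℝ^D and σ²_n : Ω → (0, ∞)^D be sequences of random vectors with max_d |ψ_{n,d} − ψ_{0,d}| → 0 in probability and max_d |σ²_{n,d} − σ²_{0,d}| → 0 in probability. Then sup_{λ ≥ 0} |Crit(λ, ψ_n, σ²_n, n) − Crit_∞(λ, ψ₀)| → 0 in probability as n → ∞. -/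
open MeasureTheory ProbabilityTheory Filter Finset
open scoped Topology

/-- The soft-thresholding operator `S_λ : ℝ → ℝ`:
`S_λ(x) = x + λ` if `x < −λ`, `S_λ(x) = 0` if `|x| ≤ λ`, and `S_λ(x) = x − λ` if `x > λ`. -/
noncomputable def softThreshold (lam x : ℝ) : ℝ :=
  if x < -lam then x + lam else if x ≤ lam then 0 else x - lam

/-- `μ_λ(m, s², n)`: the mean of `S_λ(Z)` where `Z ~ N(m, s²/n)`. -/
noncomputable def softThresholdMean (lam m s2 : ℝ) (n : ℕ) : ℝ :=
  ∫ z, softThreshold lam z ∂(gaussianReal m (Real.toNNReal (s2 / n)))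

/-- `σ²_λ(m, s², n)`: the variance of `S_λ(Z)` where `Z ~ N(m, s²/n)`. -/
noncomputable def softThresholdVar (lam m s2 : ℝ) (n : ℕ) : ℝ :=
  (∫ z, softThreshold lam z ^ 2 ∂(gaussianReal m (Real.toNNReal (s2 / n)))) -
    softThresholdMean lam m s2 n ^ 2

/-- The L1 tuning criterion
`Crit(λ, ψ, s², n) = Σ_d [(μ_λ(ψ_d, s²_d, n) − ψ_d)² + σ²_λ(ψ_d, s²_d, n)]`. -/
noncomputable def l1Crit {D : ℕ} (lam : ℝ) (ψ s2 : Fin D → ℝ) (n : ℕ) : ℝ :=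
  ∑ d, ((softThresholdMean lam (ψ d) (s2 d) n - ψ d) ^ 2 + softThresholdVar lam (ψ d) (s2 d) n)

/-- The limiting L1 tuning criterion `Crit_∞(λ, ψ) = Σ_d (S_λ(ψ_d) − ψ_d)²`. -/
noncomputable def l1CritLimit {D : ℕ} (lam : ℝ) (ψ : Fin D → ℝ) : ℝ :=
  ∑ d, (softThreshold lam (ψ d) - ψ d) ^ 2

section L1CritAux
open Real
open scoped NNReal ENNReal

lemma st_meas (lam : ℝ) : Measurable (softThreshold lam) := by
  unfold softThreshold
  exact Measurable.ite (measurableSet_lt measurable_id measurable_const)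
    (measurable_id.add_const _)
    (Measurable.ite (measurableSet_le measurable_id measurable_const) measurable_const
      (measurable_id.sub_const _))

lemma st_abs_le {lam : ℝ} (hlam : 0 ≤ lam) (x : ℝ) : |softThreshold lam x| ≤ |x| := by
  unfold softThreshold
  split_ifs with h1 h2 <;> rw [abs_le] <;> constructor <;>
    cases abs_le.1 (le_refl |x|) <;> nlinarith [abs_nonneg x, le_abs_self x, neg_abs_le x]

lemma st_lip {lam : ℝ} (hlam : 0 ≤ lam) (x y : ℝ) :
    |softThreshold lam x - softThreshold lam y| ≤ |x - y| := by
  unfold softThreshold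
  split_ifs with h1 h2 h3 h4 h5 h6 h7 h8 <;> rw [abs_le] <;> constructor <;>
    nlinarith [le_abs_self (x - y), neg_abs_le (x - y)]

lemma st_sub_self_abs_le {lam : ℝ} (hlam : 0 ≤ lam) (x : ℝ) :
    |softThreshold lam x - x| ≤ |x| := by
  unfold softThreshold
  split_ifs with h1 h2 <;> rw [abs_le] <;> constructor <;>
    nlinarith [le_abs_self x, neg_abs_le x]

lemma sq_exp_bound {V y : ℝ} (hV : 0 < V) :
    y^2 * rexp (-y^2 / (2*V)) ≤ 4*V * rexp (-y^2 / (4*V)) := by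
  set u : ℝ := y^2 / (2*V) with hu
  have hu0 : 0 ≤ u := by positivity
  have h1 : u/2 + 1 ≤ rexp (u/2) := Real.add_one_le_exp _
  have h3 : u * rexp (-u) ≤ 2 * (rexp (u/2) * rexp (-u)) := by
    have := Real.exp_pos (-u); nlinarith
  have h4 : rexp (u/2) * rexp (-u) = rexp (-(u/2)) := by
    rw [← Real.exp_add]; ring_nf
  have h5 : u * rexp (-u) ≤ 2 * rexp (-(u/2)) := by rw [← h4]; linarith
  have hy2 : y^2 = 2*V*u := by rw [hu]; field_simp
  have harg1 : -y^2 / (2*V) = -u := by field_simp [hu]; rw [hy2]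
  have harg2 : -y^2 / (4*V) = -(u/2) := by rw [hu, div_div]; ring_nf
  rw [harg1, harg2, hy2]
  calc 2*V*u * rexp (-u) = 2*V*(u * rexp (-u)) := by ring
    _ ≤ 2*V*(2 * rexp (-(u/2))) := by
        exact mul_le_mul_of_nonneg_left h5 (by positivity)
    _ = 4*V * rexp (-(u/2)) := by ring

lemma gaussian_core (m : ℝ) {v : ℝ≥0} (hv : v ≠ 0) :
    Integrable (fun z => (z - m)^2) (gaussianReal m v) ∧
    ∫ z, (z - m)^2 ∂(gaussianReal m v) ≤ 6 * v := by
  set V : ℝ := (v : ℝ) with hVdef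
  have hV : 0 < V := by positivity
  have hmeasf : Measurable fun x => Real.toNNReal (gaussianPDFReal m v x) :=
    (measurable_gaussianPDFReal m v).real_toNNReal
  have hpdf : gaussianPDF m v = fun x => ((Real.toNNReal (gaussianPDFReal m v x) : ℝ≥0) : ℝ≥0∞) := rfl
  have hsmul : ∀ x : ℝ, (Real.toNNReal (gaussianPDFReal m v x)) • ((x - m)^2)
      = gaussianPDFReal m v x * (x - m)^2 := by
    intro x
    rw [NNReal.smul_def, Real.coe_toNNReal _ (gaussianPDFReal_nonneg m v x), smul_eq_mul]
  set c : ℝ := (Real.sqrt (2 * π * V))⁻¹ with hc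
  have hc0 : 0 < Real.sqrt (2 * π * V) := Real.sqrt_pos.2 (by positivity)
  have hpdfx : ∀ x, gaussianPDFReal m v x = c * rexp (-(x-m)^2 / (2*V)) := fun x => rfl
  have hbound : ∀ x : ℝ, gaussianPDFReal m v x * (x - m)^2
      ≤ c * (4*V * rexp (-(x-m)^2 / (4*V))) := by
    intro x
    rw [hpdfx x, mul_assoc, mul_comm (rexp _)]
    exact mul_le_mul_of_nonneg_left (sq_exp_bound hV) (by positivity)
  have hfun3 : (fun x : ℝ => rexp (-(x-m)^2 / (4*V))) = fun x => rexp (-(1/(4*V)) * (x - m)^2) := by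
    funext x; congr 1; ring
  have hmajor : Integrable (fun x : ℝ => c * (4*V * rexp (-(x-m)^2 / (4*V)))) volume := by
    have hb : (0:ℝ) < 1/(4*V) := by positivity
    have h2 : Integrable (fun x : ℝ => rexp (-(1/(4*V)) * (x - m)^2)) volume :=
      (integrable_exp_neg_mul_sq hb).comp_sub_right m
    rw [show (fun x : ℝ => c * (4*V * rexp (-(x-m)^2 / (4*V))))
        = fun x => c * (4*V * rexp (-(1/(4*V)) * (x - m)^2)) by
        funext x; rw [congrFun hfun3 x]]
    exact ((h2.const_mul (4*V)).const_mul c)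
  have hint : Integrable (fun x : ℝ => gaussianPDFReal m v x * (x - m)^2) volume := by
    refine hmajor.mono' ?_ ?_
    · exact ((measurable_gaussianPDFReal m v).mul
        ((measurable_id.sub_const m).pow_const 2)).aestronglyMeasurable
    · refine Filter.Eventually.of_forall fun x => ?_
      rw [Real.norm_eq_abs,
        abs_of_nonneg (mul_nonneg (gaussianPDFReal_nonneg m v x) (sq_nonneg _))]
      exact hbound x
  constructor
  · rw [gaussianReal_of_var_ne_zero m hv, hpdf,
      integrable_withDensity_iff_integrable_smul hmeasf]
    simpa only [hsmul] using hint
  · rw [gaussianReal_of_var_ne_zero m hv, hpdf,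
      integral_withDensity_eq_integral_smul hmeasf]
    simp only [hsmul]
    have hle : ∫ x, gaussianPDFReal m v x * (x - m)^2
        ≤ ∫ x, c * (4*V * rexp (-(x-m)^2 / (4*V))) :=
      integral_mono hint hmajor hbound
    refine hle.trans ?_
    have : ∫ x : ℝ, c * (4*V * rexp (-(x-m)^2 / (4*V)))
        = c * (4*V * ∫ x : ℝ, rexp (-(x-m)^2 / (4*V))) := by
      rw [MeasureTheory.integral_const_mul, MeasureTheory.integral_const_mul]
    rw [this, hfun3]
    have hIswap : ∫ x : ℝ, rexp (-(1/(4*V)) * (x - m)^2)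
        = ∫ y : ℝ, rexp (-(1/(4*V)) * y^2) :=
      integral_sub_right_eq_self (μ := volume) (fun y => rexp (-(1/(4*V)) * y^2)) m
    rw [hIswap, integral_gaussian]
    have hπ : π / (1/(4*V)) = 2 * (2*π*V) := by field_simp; ring
    rw [hπ, Real.sqrt_mul (by norm_num : (0:ℝ) ≤ 2)]
    have hs2 : Real.sqrt 2 ≤ 3/2 := by
      nlinarith [Real.sq_sqrt (by norm_num : (0:ℝ) ≤ 2), Real.sqrt_nonneg 2]
    have : c * (4*V * (Real.sqrt 2 * Real.sqrt (2*π*V))) = 4*V*Real.sqrt 2 := by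
      rw [hc]; field_simp
    rw [this]
    nlinarith

lemma int_bound {γ : Measure ℝ} [IsProbabilityMeasure γ] {lam : ℝ} (hlam : 0 ≤ lam)
    (m m₀ K : ℝ) {t : ℝ} (ht : 0 < t)
    (hIcore : Integrable (fun z => (z - m)^2) γ) (hIle : ∫ z, (z - m)^2 ∂γ ≤ K) :
    |(((∫ z, softThreshold lam z ∂γ) - m)^2
        + ((∫ z, softThreshold lam z ^ 2 ∂γ) - (∫ z, softThreshold lam z ∂γ)^2))
      - (softThreshold lam m₀ - m₀)^2|
    ≤ (1 + 1/t) * (4*K + 6 * (m - m₀)^2) + t * m₀^2 := by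
  set S := softThreshold lam with hS
  set g : ℝ := softThreshold lam m₀ - m₀ with hg
  have hSmeas : Measurable S := st_meas lam
  have habs : ∀ z, |S z| ≤ |z| := st_abs_le hlam
  have hSsq : ∀ z, S z ^ 2 ≤ z ^ 2 := by
    intro z
    have h := sq_le_sq' (abs_le.1 (habs z)).1 (abs_le.1 (habs z)).2
    simpa [sq_abs] using h
  have hzsq : ∀ z : ℝ, z^2 ≤ 2*m^2 + 2 * (z-m)^2 := by intro z; nlinarith [sq_nonneg (z - 2*m)]
  have hKnn : 0 ≤ K := le_trans (integral_nonneg fun z => sq_nonneg _) hIle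
  have hbound : ∀ (C1 C2 : ℝ) (f : ℝ → ℝ), Measurable f → (∀ z, |f z| ≤ C1 + C2 * (z - m)^2) →
      Integrable f γ := by
    intro C1 C2 f hf hb
    refine Integrable.mono' ((integrable_const C1).add (hIcore.const_mul C2))
      hf.aestronglyMeasurable (Filter.Eventually.of_forall fun z => ?_)
    simpa using hb z
  have I1 : Integrable S γ := by
    refine hbound (|m|+1) 1 S hSmeas fun z => ?_
    have h1 : |z| - |m| ≤ |z - m| := by
      have := abs_sub_abs_le_abs_sub z m; linarith
    have h2 : |z - m| ≤ 1 + (z-m)^2 := by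
      nlinarith [sq_abs (z-m), abs_nonneg (z-m), sq_nonneg (|z-m|-1)]
    have := habs z; nlinarith
  have I2 : Integrable (fun z => S z ^ 2) γ := by
    refine hbound (2*m^2) 2 _ (hSmeas.pow_const 2) fun z => ?_
    rw [abs_of_nonneg (sq_nonneg _)]
    nlinarith [hSsq z, hzsq z]
  have If : Integrable (fun z => (S z - m)^2) γ := by
    refine hbound (6*m^2) 4 _ ((hSmeas.sub_const m).pow_const 2) fun z => ?_
    rw [abs_of_nonneg (sq_nonneg _)]
    nlinarith [hSsq z, hzsq z, sq_nonneg (S z + m)]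
  have Ifg : Integrable (fun z => (S z - m - g)^2) γ := by
    refine hbound (4*m^2 + 2*(m+g)^2) 4 _ (((hSmeas.sub_const m).sub_const g).pow_const 2)
      fun z => ?_
    rw [abs_of_nonneg (sq_nonneg _)]
    nlinarith [hSsq z, hzsq z, sq_nonneg (S z + (m+g))]
  -- crit = ∫ (S z - m)^2
  have e1 : Integrable (fun z => S z ^ 2 - (2*m) * S z) γ := I2.sub (I1.const_mul (2*m))
  have hcrit : ((∫ z, S z ∂γ) - m)^2 + ((∫ z, S z ^ 2 ∂γ) - (∫ z, S z ∂γ)^2)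
      = ∫ z, (S z - m)^2 ∂γ := by
    have h : (fun z => (S z - m)^2)
        = fun z => (S z ^ 2 - (2*m) * S z) + m^2 := by funext z; ring
    rw [h, integral_add e1 (integrable_const _),
      integral_sub I2 (I1.const_mul (2*m)), MeasureTheory.integral_const_mul, integral_const]
    simp only [measure_univ, probReal_univ, ENNReal.toReal_one, smul_eq_mul, one_mul, mul_one]
    ring
  -- E bound
  have hE : ∫ z, (S z - m - g)^2 ∂γ ≤ 4*K + 6*(m-m₀)^2 := by
    have hpt : ∀ z, (S z - m - g)^2 ≤ 4*(z-m)^2 + 6*(m-m₀)^2 := by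
      intro z
      have h1 : |S z - S m₀| ≤ |z - m₀| := st_lip hlam z m₀
      have h2 : (S z - S m₀)^2 ≤ (z - m₀)^2 := by
        have h := sq_le_sq' (abs_le.1 h1).1 (abs_le.1 h1).2
        simpa [sq_abs] using h
      have hform : S z - m - g = (S z - S m₀) - (m - m₀) := by rw [hg, hS]; ring
      rw [hform]
      nlinarith [sq_nonneg ((S z - S m₀) + (m - m₀)), sq_nonneg ((z-m) - (m-m₀)),
        sq_nonneg ((z - m₀) + (m - m₀))]
    have e2 : Integrable (fun z => 4*(z-m)^2 + 6*(m-m₀)^2) γ :=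
      (hIcore.const_mul 4).add (integrable_const _)
    calc ∫ z, (S z - m - g)^2 ∂γ ≤ ∫ z, (4*(z-m)^2 + 6*(m-m₀)^2) ∂γ :=
        integral_mono Ifg e2 hpt
      _ = 4 * (∫ z, (z-m)^2 ∂γ) + 6*(m-m₀)^2 := by
          rw [integral_add (hIcore.const_mul 4) (integrable_const _),
            MeasureTheory.integral_const_mul, integral_const]
          simp [measure_univ]
      _ ≤ 4*K + 6*(m-m₀)^2 := by nlinarith
  have hr : t * (1/t) = 1 := by field_simp
  have hup : ∀ z, (S z - m)^2 - g^2 ≤ (1+1/t)*(S z - m - g)^2 + t*g^2 := by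
    intro z
    nlinarith [mul_nonneg (by positivity : (0:ℝ) ≤ 1/t) (sq_nonneg (S z - m - g - t*g)),
      sq_nonneg (S z - m - g)]
  have hdown : ∀ z, -((1+1/t)*(S z - m - g)^2 + t*g^2) ≤ (S z - m)^2 - g^2 := by
    intro z
    nlinarith [mul_nonneg (by positivity : (0:ℝ) ≤ 1/t) (sq_nonneg (S z - m - g + t*g)),
      sq_nonneg (S z - m - g)]
  have hsubint : ∫ z, ((S z - m)^2 - g^2) ∂γ = (∫ z, (S z - m)^2 ∂γ) - g^2 := by
    rw [integral_sub If (integrable_const _), integral_const]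
    simp [measure_univ]
  have hbint : Integrable (fun z => (1+1/t)*(S z - m - g)^2 + t*g^2) γ :=
    (Ifg.const_mul _).add (integrable_const _)
  have hbval : ∫ z, ((1+1/t)*(S z - m - g)^2 + t*g^2) ∂γ
      = (1+1/t) * (∫ z, (S z - m - g)^2 ∂γ) + t*g^2 := by
    rw [integral_add (Ifg.const_mul _) (integrable_const _),
      MeasureTheory.integral_const_mul, integral_const]
    simp [measure_univ]
  have hsint : Integrable (fun z => (S z - m)^2 - g^2) γ := If.sub (integrable_const _)
  have hIup : (∫ z, (S z - m)^2 ∂γ) - g^2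
      ≤ (1+1/t) * (∫ z, (S z - m - g)^2 ∂γ) + t*g^2 := by
    rw [← hsubint, ← hbval]
    exact integral_mono hsint hbint hup
  have hIdown : -((1+1/t) * (∫ z, (S z - m - g)^2 ∂γ) + t*g^2)
      ≤ (∫ z, (S z - m)^2 ∂γ) - g^2 := by
    rw [← hsubint, ← hbval, ← integral_neg]
    exact integral_mono hbint.neg hsint hdown
  have hg2 : g^2 ≤ m₀^2 := by
    have h := st_sub_self_abs_le hlam m₀
    have h2 := sq_le_sq' (abs_le.1 h).1 (abs_le.1 h).2
    simpa [sq_abs, ← hg] using h2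
  have hEnn : 0 ≤ ∫ z, (S z - m - g)^2 ∂γ := integral_nonneg fun z => sq_nonneg _
  have htpos : (0:ℝ) < 1 + 1/t := by positivity
  have hb1 : (1+1/t) * (∫ z, (S z - m - g)^2 ∂γ) ≤ (1+1/t) * (4*K + 6*(m-m₀)^2) :=
    mul_le_mul_of_nonneg_left hE htpos.le
  have hb2 : t * g^2 ≤ t * m₀^2 := mul_le_mul_of_nonneg_left hg2 ht.le
  rw [hcrit, abs_le]
  exact ⟨le_trans (neg_le_neg (add_le_add hb1 hb2)) hIdown, hIup.trans (add_le_add hb1 hb2)⟩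

lemma key_bound {lam : ℝ} (hlam : 0 ≤ lam) (m m₀ s2 : ℝ) (hs2 : 0 < s2) {n : ℕ} (hn : 1 ≤ n)
    {t : ℝ} (ht : 0 < t) :
    |((softThresholdMean lam m s2 n - m)^2 + softThresholdVar lam m s2 n)
      - (softThreshold lam m₀ - m₀)^2|
    ≤ (1 + 1/t) * (24 * (s2/(n:ℝ)) + 6 * (m - m₀)^2) + t * m₀^2 := by
  have hnpos : (0:ℝ) < (n:ℝ) := by exact_mod_cast hn
  have hvpos : 0 < s2/(n:ℝ) := by positivity
  have hv : Real.toNNReal (s2/(n:ℝ)) ≠ 0 := by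
    simp only [ne_eq, Real.toNNReal_eq_zero, not_le]; exact hvpos
  obtain ⟨hIcore, hIle⟩ := gaussian_core m hv
  have hIle' : ∫ z, (z - m)^2 ∂(gaussianReal m (Real.toNNReal (s2/(n:ℝ)))) ≤ 6 * (s2/(n:ℝ)) := by
    rwa [Real.coe_toNNReal _ hvpos.le] at hIle
  have h := int_bound hlam m m₀ (6 * (s2/(n:ℝ))) ht hIcore hIle'
  unfold softThresholdMean softThresholdVar softThresholdMean
  convert h using 3 <;> ring


lemma crit_sum_bound {D : ℕ} {lam : ℝ} (hlam : 0 ≤ lam) (ψ ψ₀ s2 : Fin D → ℝ)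
    (hs2 : ∀ d, 0 < s2 d) {n : ℕ} (hn : 1 ≤ n) {t : ℝ} (ht : 0 < t) :
    |l1Crit lam ψ s2 n - l1CritLimit lam ψ₀|
    ≤ ∑ d, ((1 + 1/t) * (24 * (s2 d/(n:ℝ)) + 6 * (ψ d - ψ₀ d)^2) + t * (ψ₀ d)^2) := by
  unfold l1Crit l1CritLimit
  rw [← Finset.sum_sub_distrib]
  refine (Finset.abs_sum_le_sum_abs _ _).trans (Finset.sum_le_sum fun d _ => ?_)
  exact key_bound hlam (ψ d) (ψ₀ d) (s2 d) (hs2 d) hn ht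


end L1CritAux

/-- uniform convergence in probability of the random L1 tuning criterion to the
limiting criterion: `sup_{λ ≥ 0} |Crit(λ, ψ_n, σ²_n, n) − Crit_∞(λ, ψ₀)| → 0` in probability. -/
theorem l1_crit_uniform_convergence_in_probability
    {Ω : Type*} [MeasurableSpace Ω] (P : Measure Ω) [IsProbabilityMeasure P]
    (D : ℕ) (hD : 1 ≤ D) (ψ₀ : Fin D → ℝ) (σ2₀ : Fin D → ℝ) (hσ2₀ : ∀ d, 0 < σ2₀ d)
    (ψn : ℕ → Ω → Fin D → ℝ) (hψmeas : ∀ n, Measurable (ψn n))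
    (hψprob : TendstoInProbability P ψn ψ₀)
    (σ2n : ℕ → Ω → Fin D → ℝ) (hσmeas : ∀ n, Measurable (σ2n n))
    (hσpos : ∀ n ω d, 0 < σ2n n ω d)
    (hσprob : TendstoInProbability P σ2n σ2₀) :
    TendstoInProbability P
      (fun n ω => ⨆ lam : {lam : ℝ // 0 ≤ lam},
        |l1Crit lam.1 (ψn n ω) (σ2n n ω) n - l1CritLimit lam.1 ψ₀|)
      (0 : ℝ) := by
  intro ε hε
  set Sψ : ℝ := ∑ d, (ψ₀ d)^2 with hSψ
  have hSψnn : 0 ≤ Sψ := Finset.sum_nonneg fun d _ => sq_nonneg _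
  set t : ℝ := ε / (2*(Sψ+1)) with htdef
  have ht : 0 < t := by positivity
  have htS : t * Sψ ≤ ε/2 := by
    rw [htdef, div_mul_eq_mul_div, div_le_div_iff₀ (by positivity) (by norm_num)]
    nlinarith
  have hc1 : (0:ℝ) < 1 + 1/t := by positivity
  set A : ℝ := (1+1/t) * 6 * ((D:ℝ)+1) with hA
  have hApos : 0 < A := by positivity
  set δ : ℝ := Real.sqrt (ε/(4*A)) with hδdef
  have hδpos : 0 < δ := Real.sqrt_pos.2 (by positivity)
  have hδsq : δ^2 = ε/(4*A) := Real.sq_sqrt (by positivity)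
  have hδ : (1+1/t) * (6*(D:ℝ)*δ^2) ≤ ε/4 := by
    have h1 : (1+1/t) * (6*(D:ℝ)) ≤ A := by
      rw [hA]; nlinarith [hc1.le]
    have h2 : (1+1/t) * (6*(D:ℝ)*δ^2) = ((1+1/t) * (6*(D:ℝ))) * (ε/(4*A)) := by
      rw [hδsq]; ring
    have h3 : ((1+1/t) * (6*(D:ℝ))) * (ε/(4*A)) ≤ A * (ε/(4*A)) :=
      mul_le_mul_of_nonneg_right h1 (by positivity)
    have h4 : A * (ε/(4*A)) = ε/4 := by field_simp
    rw [h2]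
    linarith
  set Mσ : ℝ := ∑ d, σ2₀ d with hMσ
  set C : ℝ := (1+1/t) * 24 * (Mσ + D) with hC
  have hev1 : ∀ᶠ n : ℕ in atTop, C/(n:ℝ) < ε/4 :=
    (tendsto_const_div_atTop_nhds_zero_nat C).eventually
      (gt_mem_nhds (by positivity : (0:ℝ) < ε/4))
  have hP1 := hψprob δ hδpos
  have hP2 := hσprob 1 one_pos
  have hup : Tendsto (fun n => P {ω | δ < ‖ψn n ω - ψ₀‖} + P {ω | 1 < ‖σ2n n ω - σ2₀‖})
      atTop (𝓝 0) := by
    have := hP1.add hP2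
    simpa using this
  refine tendsto_of_tendsto_of_tendsto_of_le_of_le' tendsto_const_nhds hup
    (Filter.Eventually.of_forall fun n => zero_le) ?_
  filter_upwards [hev1, eventually_ge_atTop 1] with n hevn hn
  have hsub : {ω | ε < ‖(⨆ lam : {lam : ℝ // 0 ≤ lam},
        |l1Crit lam.1 (ψn n ω) (σ2n n ω) n - l1CritLimit lam.1 ψ₀|) - 0‖}
      ⊆ {ω | δ < ‖ψn n ω - ψ₀‖} ∪ {ω | 1 < ‖σ2n n ω - σ2₀‖} := by
    intro ω hω
    by_contra hcon
    simp only [Set.mem_union, Set.mem_setOf_eq, not_or, not_lt] at hcon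
    obtain ⟨h1, h2⟩ := hcon
    apply absurd hω
    simp only [Set.mem_setOf_eq, not_lt, sub_zero, Real.norm_eq_abs]
    rw [abs_of_nonneg (Real.iSup_nonneg fun lam => abs_nonneg _)]
    refine Real.iSup_le (fun lam => ?_) hε.le
    have hψd : ∀ d, |ψn n ω d - ψ₀ d| ≤ δ := by
      intro d
      have := norm_le_pi_norm (ψn n ω - ψ₀) d
      simp only [Pi.sub_apply, Real.norm_eq_abs] at this
      exact this.trans h1
    have hσd : ∀ d, σ2n n ω d ≤ σ2₀ d + 1 := by
      intro d
      have h := norm_le_pi_norm (σ2n n ω - σ2₀) d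
      simp only [Pi.sub_apply, Real.norm_eq_abs] at h
      have := (abs_le.1 (h.trans h2)).2
      linarith
    refine (crit_sum_bound lam.2 (ψn n ω) ψ₀ (σ2n n ω) (hσpos n ω) hn ht).trans ?_
    have hnpos : (0:ℝ) < (n:ℝ) := by exact_mod_cast hn
    have hstep : ∑ d, ((1 + 1/t) * (24 * (σ2n n ω d/(n:ℝ)) + 6 * (ψn n ω d - ψ₀ d)^2)
          + t * (ψ₀ d)^2)
        ≤ ∑ d, (((1+1/t) * 24 / (n:ℝ)) * (σ2₀ d + 1) + (1+1/t)*(6*δ^2) + t * (ψ₀ d)^2) := by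
      refine Finset.sum_le_sum fun d _ => ?_
      have hb2 : (ψn n ω d - ψ₀ d)^2 ≤ δ^2 := by
        have h := hψd d
        nlinarith [abs_nonneg (ψn n ω d - ψ₀ d), sq_abs (ψn n ω d - ψ₀ d)]
      have hs : σ2n n ω d / (n:ℝ) ≤ (σ2₀ d + 1)/(n:ℝ) :=
        div_le_div_of_nonneg_right (hσd d) hnpos.le
      have h24 : 24*(σ2n n ω d/(n:ℝ)) + 6*(ψn n ω d - ψ₀ d)^2
          ≤ 24*((σ2₀ d + 1)/(n:ℝ)) + 6*δ^2 := by linarith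
      have hmul := mul_le_mul_of_nonneg_left h24 hc1.le
      have heqd : (1+1/t)*(24*((σ2₀ d + 1)/(n:ℝ)) + 6*δ^2)
          = ((1+1/t)*24/(n:ℝ))*(σ2₀ d + 1) + (1+1/t)*(6*δ^2) := by ring
      linarith
    have hsum1 : ∑ d : Fin D, (σ2₀ d + 1) = Mσ + (D:ℝ) := by
      rw [Finset.sum_add_distrib, Finset.sum_const, Finset.card_univ, Fintype.card_fin,
        nsmul_eq_mul, mul_one]
    have heq : ∑ d, (((1+1/t) * 24 / (n:ℝ)) * (σ2₀ d + 1) + (1+1/t)*(6*δ^2) + t * (ψ₀ d)^2)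
        = ((1+1/t)*24/(n:ℝ))*(Mσ+(D:ℝ)) + (D:ℝ)*((1+1/t)*(6*δ^2)) + t*Sψ := by
      simp only [Finset.sum_add_distrib, ← Finset.mul_sum, hsum1, Finset.sum_const,
        Finset.card_univ, Fintype.card_fin, nsmul_eq_mul, ← hSψ]
      ring
    refine hstep.trans ?_
    rw [heq]
    have e1 : ((1+1/t)*24/(n:ℝ))*(Mσ+(D:ℝ)) = C/(n:ℝ) := by rw [hC]; ring
    have e2 : (D:ℝ)*((1+1/t)*(6*δ^2)) = (1+1/t)*(6*(D:ℝ)*δ^2) := by ring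
    rw [e1, e2]
    linarith
  calc P {ω | ε < ‖(⨆ lam : {lam : ℝ // 0 ≤ lam},
        |l1Crit lam.1 (ψn n ω) (σ2n n ω) n - l1CritLimit lam.1 ψ₀|) - 0‖}
      ≤ P ({ω | δ < ‖ψn n ω - ψ₀‖} ∪ {ω | 1 < ‖σ2n n ω - σ2₀‖}) := measure_mono hsub
    _ ≤ P {ω | δ < ‖ψn n ω - ψ₀‖} + P {ω | 1 < ‖σ2n n ω - σ2₀‖} := measure_union_le _ _
end

section
/- Let μ ∈ ℝ, σ² > 0 and λ ≥ 0, and let Z be a random variable with law N(μ, σ²). Then E[S_λ(Z)] = μ − μ(Φ_{μ,σ²}(λ) − Φ_{μ,σ²}(−λ)) + λ(Φ_{μ,σ²}(λ) + Φ_{μ,σ²}(−λ) − 1) + σ²(φ_{μ,σ²}(λ) − φ_{μ,σ²}(−λ)). -/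
open scoped NNReal ENNReal
open MeasureTheory ProbabilityTheory Real Set Filter Topology

section Aux

variable (μ : ℝ) {v : ℝ≥0}

lemma gpdf_arg_tendsto_atTop (hv : v ≠ 0) :
    Tendsto (fun x : ℝ => -(x - μ)^2 / (2 * (v:ℝ))) atTop atBot := by
  have hv' : (0:ℝ) < 2 * (v:ℝ) := by
    have : 0 < v := zero_lt_iff.mpr hv
    have : (0:ℝ) < (v:ℝ) := by exact_mod_cast this
    linarith
  apply Tendsto.atBot_div_const hv'
  apply tendsto_neg_atBot_iff.mpr
  have habs : Tendsto (fun x : ℝ => |x - μ|) atTop atTop :=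
    tendsto_abs_atTop_atTop.comp (tendsto_atTop_add_const_right _ (-μ) tendsto_id)
  have := (tendsto_pow_atTop (n := 2) two_ne_zero).comp habs
  simpa [Function.comp_def, sq_abs] using this

lemma gpdf_arg_tendsto_atBot (hv : v ≠ 0) :
    Tendsto (fun x : ℝ => -(x - μ)^2 / (2 * (v:ℝ))) atBot atBot := by
  have hv' : (0:ℝ) < 2 * (v:ℝ) := by
    have : 0 < v := zero_lt_iff.mpr hv
    have : (0:ℝ) < (v:ℝ) := by exact_mod_cast this
    linarith
  apply Tendsto.atBot_div_const hv'
  apply tendsto_neg_atBot_iff.mpr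
  have habs : Tendsto (fun x : ℝ => |x - μ|) atBot atTop :=
    tendsto_abs_atBot_atTop.comp (tendsto_atBot_add_const_right _ (-μ) tendsto_id)
  have := (tendsto_pow_atTop (n := 2) two_ne_zero).comp habs
  simpa [Function.comp_def, sq_abs] using this

lemma gpdf_tendsto_atTop (hv : v ≠ 0) :
    Tendsto (gaussianPDFReal μ v) atTop (𝓝 0) := by
  have := (Real.tendsto_exp_atBot.comp (gpdf_arg_tendsto_atTop μ hv)).const_mul
    (√(2 * π * (v:ℝ)))⁻¹
  simpa [gaussianPDFReal_def, Function.comp_def] using this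

lemma gpdf_tendsto_atBot (hv : v ≠ 0) :
    Tendsto (gaussianPDFReal μ v) atBot (𝓝 0) := by
  have := (Real.tendsto_exp_atBot.comp (gpdf_arg_tendsto_atBot μ hv)).const_mul
    (√(2 * π * (v:ℝ)))⁻¹
  simpa [gaussianPDFReal_def, Function.comp_def] using this

lemma gpdf_hasDerivAt (hv : v ≠ 0) (x : ℝ) :
    HasDerivAt (fun y => -(v:ℝ) * gaussianPDFReal μ v y)
      ((x - μ) * gaussianPDFReal μ v x) x := by
  have hvne : (v:ℝ) ≠ 0 := by exact_mod_cast hv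
  have h1 : HasDerivAt (fun y : ℝ => (y - μ)^2) (2 * (x - μ)) x := by
    simpa using ((hasDerivAt_id x).sub_const μ).fun_pow 2
  have hinner : HasDerivAt (fun y : ℝ => -(y - μ)^2 / (2 * (v:ℝ)))
      (-(2 * (x - μ)) / (2 * (v:ℝ))) x := by
    simpa [neg_div] using (h1.div_const (2 * (v:ℝ))).fun_neg
  have h2 := (hinner.exp.const_mul (√(2 * π * (v:ℝ)))⁻¹).const_mul (-(v:ℝ))
  have heq : (fun y => -(v:ℝ) * gaussianPDFReal μ v y)
      = fun y => -(v:ℝ) * ((√(2 * π * (v:ℝ)))⁻¹ * rexp (-(y - μ)^2 / (2 * (v:ℝ)))) := by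
    funext y; rw [gaussianPDFReal]
  rw [heq]
  refine h2.congr_deriv ?_
  rw [gaussianPDFReal_def]
  field_simp

lemma gpdf_moment_integrable (hv : v ≠ 0) :
    Integrable (fun x => (x - μ) * gaussianPDFReal μ v x) := by
  have hvpos : (0:ℝ) < (v:ℝ) := by exact_mod_cast zero_lt_iff.mpr hv
  have hb : (0:ℝ) < (2 * (v:ℝ))⁻¹ := by positivity
  have h1 : Integrable (fun x : ℝ => x * rexp (-((2 * (v:ℝ))⁻¹) * x ^ 2)) :=
    integrable_mul_exp_neg_mul_sq hb
  have h2 := (h1.comp_sub_right μ).const_mul (√(2 * π * (v:ℝ)))⁻¹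
  refine h2.congr (Eventually.of_forall fun x => ?_)
  simp only [gaussianPDFReal_def]
  rw [show -(x - μ)^2 / (2 * (v:ℝ)) = -(2 * (v:ℝ))⁻¹ * (x - μ)^2 by
    field_simp]
  ring

end Aux

/-- mean of the soft-thresholded Gaussian. For `Z ~ N(μ, σ²)` with `σ² > 0` and
`λ ≥ 0`:
`E[S_λ(Z)] = μ − μ(Φ(λ) − Φ(−λ)) + λ(Φ(λ) + Φ(−λ) − 1) + σ²(φ(λ) − φ(−λ))`,
where `Φ = Φ_{μ,σ²}` and `φ = φ_{μ,σ²}` are the CDF and density of `N(μ, σ²)`. -/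
theorem softThreshold_gaussian_mean (μ s2 lam : ℝ) (hs2 : 0 < s2) (hlam : 0 ≤ lam) :
    ∫ z, softThreshold lam z ∂(gaussianReal μ s2.toNNReal) =
      μ - μ * (cdf (gaussianReal μ s2.toNNReal) lam - cdf (gaussianReal μ s2.toNNReal) (-lam))
        + lam * (cdf (gaussianReal μ s2.toNNReal) lam
          + cdf (gaussianReal μ s2.toNNReal) (-lam) - 1)
        + s2 * (gaussianPDFReal μ s2.toNNReal lam - gaussianPDFReal μ s2.toNNReal (-lam)) := by
  set v : ℝ≥0 := s2.toNNReal with hvdef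
  have hvr : (v:ℝ) = s2 := Real.coe_toNNReal _ hs2.le
  have hv : v ≠ 0 := by
    intro h
    rw [h] at hvr
    simp only [NNReal.coe_zero] at hvr
    linarith
  set p : ℝ → ℝ := gaussianPDFReal μ v with hpdef
  set ν : Measure ℝ := gaussianReal μ v with hnudef
  have hpnn : ∀ x, 0 ≤ p x := fun x => gaussianPDFReal_nonneg μ v x
  have hpint : Integrable p := integrable_gaussianPDFReal μ v
  have hmom : Integrable (fun x => (x - μ) * p x) := gpdf_moment_integrable μ hv
  -- reduce integrals over ν to Lebesgue integrals
  have hrepr : ∀ g : ℝ → ℝ, ∫ z, g z ∂ν = ∫ z, g z * p z := by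
    intro g
    rw [hnudef, gaussianReal_of_var_ne_zero μ hv]
    have hden : gaussianPDF μ v = fun x => ((p x).toNNReal : ℝ≥0∞) := by
      funext x
      simp [gaussianPDF, ENNReal.ofReal, hpdef]
    rw [hden, integral_withDensity_eq_integral_smul
      ((measurable_gaussianPDFReal μ v).real_toNNReal) g]
    congr 1
    funext x
    simp [NNReal.smul_def, Real.coe_toNNReal _ (hpnn x), mul_comm, hpdef,
      max_eq_left (gaussianPDFReal_nonneg μ v x)]
  -- cdf in terms of p
  have hcdf : ∀ t, cdf ν t = ∫ x in Iic t, p x := by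
    intro t
    rw [hnudef, cdf_eq_real, measureReal_def, gaussianReal_apply_eq_integral μ hv,
      ENNReal.toReal_ofReal (setIntegral_nonneg measurableSet_Iic fun x _ => hpnn x)]
  have hIoi_p : ∀ t, ∫ x in Ioi t, p x = 1 - cdf ν t := by
    intro t
    have h := integral_add_compl (μ := volume) (f := p) (measurableSet_Iic (a := t)) hpint
    rw [compl_Iic] at h
    have h1 : ∫ x, p x = 1 := integral_gaussianPDFReal_eq_one μ hv
    rw [hcdf t]
    rw [h1] at h
    linarith
  -- key moment integrals
  have hIic_m : ∀ t, ∫ x in Iic t, (x - μ) * p x = -s2 * p t := by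
    intro t
    have := integral_Iic_of_hasDerivAt_of_tendsto'
      (f := fun y => -(v:ℝ) * p y) (f' := fun x => (x - μ) * p x) (a := t)
      (fun x _ => gpdf_hasDerivAt μ hv x) hmom.integrableOn
      (by simpa using (gpdf_tendsto_atBot μ hv).const_mul (-(v:ℝ)))
    rw [this, hvr]
    ring
  have hIoi_m : ∀ t, ∫ x in Ioi t, (x - μ) * p x = s2 * p t := by
    intro t
    have := integral_Ioi_of_hasDerivAt_of_tendsto'
      (f := fun y => -(v:ℝ) * p y) (f' := fun x => (x - μ) * p x) (a := t)
      (fun x _ => gpdf_hasDerivAt μ hv x) hmom.integrableOn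
      (by simpa using (gpdf_tendsto_atTop μ hv).const_mul (-(v:ℝ)))
    rw [this, hvr]
    ring
  -- integrability of shifted moments
  have hshift : ∀ c : ℝ, Integrable (fun x => (x + c) * p x) := by
    intro c
    have h := hmom.add (hpint.const_mul (μ + c))
    exact h.congr (Eventually.of_forall fun x => by simp only [Pi.add_apply]; ring)
  -- decompose softThreshold
  have hdecomp : ∀ z, softThreshold lam z * p z =
      (Ioi lam).indicator (fun z => (z - lam) * p z) z
        + (Iio (-lam)).indicator (fun z => (z + lam) * p z) z := by
    intro z
    unfold softThreshold
    rcases lt_trichotomy z (-lam) with h | h | h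
    · rw [if_pos h, indicator_of_notMem (by simp only [mem_Ioi, not_lt]; linarith),
        indicator_of_mem (by simpa using h)]
      ring
    · subst h
      rw [if_neg (lt_irrefl _), if_pos (by linarith),
        indicator_of_notMem (by simp only [mem_Ioi, not_lt]; linarith),
        indicator_of_notMem (by simp)]
      ring
    · rcases le_or_gt z lam with h2 | h2
      · rw [if_neg (by linarith), if_pos h2,
          indicator_of_notMem (by simpa using h2),
          indicator_of_notMem (by simp only [mem_Iio, not_lt]; linarith)]
        ring
      · rw [if_neg (by linarith), if_neg (by linarith),
          indicator_of_mem (by simpa using h2),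
          indicator_of_notMem (by simp only [mem_Iio, not_lt]; linarith)]
        ring
  rw [hrepr]
  calc ∫ z, softThreshold lam z * p z
      = ∫ z, ((Ioi lam).indicator (fun z => (z - lam) * p z) z
          + (Iio (-lam)).indicator (fun z => (z + lam) * p z) z) :=
        integral_congr_ae (Eventually.of_forall hdecomp)
    _ = (∫ z in Ioi lam, (z - lam) * p z) + ∫ z in Iio (-lam), (z + lam) * p z := by
        rw [integral_add (((hshift (-lam)).congr (Eventually.of_forall fun x => by
              ring)).indicator measurableSet_Ioi)
            ((hshift lam).indicator measurableSet_Iio),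
          integral_indicator measurableSet_Ioi, integral_indicator measurableSet_Iio]
    _ = (∫ z in Ioi lam, ((z - μ) * p z + (μ - lam) * p z))
          + ∫ z in Iic (-lam), ((z - μ) * p z + (μ + lam) * p z) := by
        congr 1
        · exact setIntegral_congr_fun measurableSet_Ioi fun x _ => by ring
        · rw [setIntegral_congr_set (Iio_ae_eq_Iic (a := -lam))]
          exact setIntegral_congr_fun measurableSet_Iic fun x _ => by ring
    _ = (s2 * p lam + (μ - lam) * (1 - cdf ν lam))
          + (-s2 * p (-lam) + (μ + lam) * cdf ν (-lam)) := by
        rw [integral_add hmom.integrableOn ((hpint.const_mul _).integrableOn),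
          integral_add hmom.integrableOn ((hpint.const_mul _).integrableOn),
          integral_const_mul, integral_const_mul, hIoi_m, hIic_m, hIoi_p, ← hcdf]
    _ = _ := by ring
end

section
/- Let μ ∈ ℝ, σ² > 0 and λ ≥ 0, and let Z be a random variable with law N(μ, σ²). Then Var(S_λ(Z)) = 2(μ² + σ² + λ²) − ((μ + λ)² + σ²)(1 − Φ_{μ,σ²}(−λ)) − ((μ − λ)² + σ²)Φ_{μ,σ²}(λ) − (μ + λ)σ²φ_{μ,σ²}(−λ) + (μ − λ)σ²φ_{μ,σ²}(λ) − (E[S_λ(Z)])², where Var(S_λ(Z)) = E[S_λ(Z)²] − (E[S_λ(Z)])². -/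
open MeasureTheory ProbabilityTheory
open Real Filter Set
open scoped NNReal ENNReal

lemma B1 {b : ℝ} (hb : 0 < b) : Tendsto (fun w : ℝ => w * rexp (-b * w^2)) atTop (nhds 0) := by
  have hmain : Tendsto (fun w : ℝ => w * rexp (-w)) atTop (nhds 0) := by
    simpa using Real.tendsto_pow_mul_exp_neg_atTop_nhds_zero 1
  refine squeeze_zero' ?_ ?_ hmain
  · filter_upwards [eventually_ge_atTop (0:ℝ)] with w hw
    positivity
  · filter_upwards [eventually_ge_atTop (max 0 b⁻¹)] with w hw
    have hw0 : 0 ≤ w := le_trans (le_max_left _ _) hw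
    have hwb : b⁻¹ ≤ w := le_trans (le_max_right _ _) hw
    have h1 : 1 ≤ b * w := by
      rw [← mul_inv_cancel₀ hb.ne']
      exact mul_le_mul_of_nonneg_left hwb hb.le
    have : -b * w^2 ≤ -w := by nlinarith
    exact mul_le_mul_of_nonneg_left (Real.exp_le_exp.2 this) hw0

lemma B2 {b : ℝ} (hb : 0 < b) : Tendsto (fun w : ℝ => rexp (-b * w^2)) atTop (nhds 0) := by
  have h1 : Tendsto (fun w : ℝ => b * w^2) atTop atTop :=
    (tendsto_pow_atTop two_ne_zero).const_mul_atTop hb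
  exact (Real.tendsto_exp_neg_atTop_nhds_zero.comp h1).congr
    (fun w => by simp [Function.comp_apply, neg_mul])

lemma Mlem {b : ℝ} (hb : 0 < b) (c d : ℝ) :
    Tendsto (fun x : ℝ => (x + c) * rexp (-b * (x + d)^2)) atTop (nhds 0) := by
  have hg : Tendsto (fun y : ℝ => (y + (c - d)) * rexp (-b * y^2)) atTop (nhds 0) := by
    have := (B1 hb).add ((B2 hb).const_mul (c - d))
    simpa [add_mul, mul_comm] using this
  have hcomp := hg.comp (tendsto_atTop_add_const_right atTop d tendsto_id)
  refine hcomp.congr (fun x => ?_)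
  simp only [Function.comp_apply, id_eq]
  ring_nf

section
variable {μ : ℝ} {v : ℝ≥0}

lemma pdf_hasDerivAt (hv : 0 < (v:ℝ)) (x : ℝ) :
    HasDerivAt (gaussianPDFReal μ v) ((μ - x) / v * gaussianPDFReal μ v x) x := by
  have h1 : HasDerivAt (fun x : ℝ => -(x - μ)^2 / (2*(v:ℝ))) ((μ - x)/(v:ℝ)) x := by
    have h0 : HasDerivAt (fun x : ℝ => (x - μ)^2) (2*(x-μ)) x := by
      simpa using ((hasDerivAt_id x).sub_const μ).fun_pow 2
    have := h0.neg.div_const (2*(v:ℝ))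
    convert this using 1
    · rfl
    · rfl
    · rfl
    field_simp
    ring
  have h2 := (h1.exp).const_mul (√(2 * π * (v:ℝ)))⁻¹
  show HasDerivAt (fun x : ℝ => (√(2 * π * (v:ℝ)))⁻¹ * rexp (-(x - μ)^2 / (2*(v:ℝ)))) _ x
  convert h2 using 1
  · rfl
  · rfl
  unfold gaussianPDFReal
  ring

lemma G_hasDerivAt (hv : 0 < (v:ℝ)) (a x : ℝ) :
    HasDerivAt (fun z => -((v:ℝ) * (z + a) * gaussianPDFReal μ v z))
      (((x + a) * (x - μ) - v) * gaussianPDFReal μ v x) x := by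
  have h := ((hasDerivAt_id x).add_const a).mul (pdf_hasDerivAt (μ := μ) hv x)
  have h2 := (h.const_mul (v:ℝ)).neg
  have hv' : (v:ℝ) ≠ 0 := hv.ne'
  convert h2 using 1
  · rfl
  · rfl
  · funext z; simp only [id_eq, Pi.neg_apply, Pi.mul_apply]; ring
  · simp only [id_eq]; field_simp; ring

lemma pdf_mul_tendsto_atTop (hv : 0 < (v:ℝ)) (a : ℝ) :
    Tendsto (fun z => (z + a) * gaussianPDFReal μ v z) atTop (nhds 0) := by
  have hb : 0 < (2*(v:ℝ))⁻¹ := by positivity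
  have := (Mlem hb a (-μ)).const_mul (√(2 * π * (v:ℝ)))⁻¹
  rw [mul_zero] at this
  refine this.congr (fun z => ?_)
  rw [gaussianPDFReal]
  rw [show -(z - μ)^2 / (2*(v:ℝ)) = -(2*(v:ℝ))⁻¹ * (z + -μ)^2 by ring]
  ring

lemma pdf_mul_tendsto_atBot (hv : 0 < (v:ℝ)) (a : ℝ) :
    Tendsto (fun z => (z + a) * gaussianPDFReal μ v z) atBot (nhds 0) := by
  have hb : 0 < (2*(v:ℝ))⁻¹ := by positivity
  have h1 := ((Mlem hb (-a) μ).const_mul (√(2 * π * (v:ℝ)))⁻¹).neg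
  rw [mul_zero, neg_zero] at h1
  have h2 := h1.comp tendsto_neg_atBot_atTop
  refine h2.congr (fun z => ?_)
  simp only [Function.comp_apply]
  rw [gaussianPDFReal]
  rw [show -(z - μ)^2 / (2*(v:ℝ)) = -(2*(v:ℝ))⁻¹ * (-z + μ)^2 by ring]
  ring

lemma G_tendsto_atTop (hv : 0 < (v:ℝ)) (a : ℝ) :
    Tendsto (fun z => -((v:ℝ) * (z + a) * gaussianPDFReal μ v z)) atTop (nhds 0) := by
  have := ((pdf_mul_tendsto_atTop (μ := μ) hv a).const_mul (v:ℝ)).neg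
  simpa [mul_assoc] using this

lemma G_tendsto_atBot (hv : 0 < (v:ℝ)) (a : ℝ) :
    Tendsto (fun z => -((v:ℝ) * (z + a) * gaussianPDFReal μ v z)) atBot (nhds 0) := by
  have := ((pdf_mul_tendsto_atBot (μ := μ) hv a).const_mul (v:ℝ)).neg
  simpa [mul_assoc] using this

end

section
variable {μ : ℝ} {v : ℝ≥0}

lemma sq_mul_exp_integrable {b : ℝ} (hb : 0 < b) :
    Integrable (fun y : ℝ => y^2 * rexp (-b * y^2)) := by
  refine Integrable.mono' ((integrable_exp_neg_mul_sq (half_pos hb)).const_mul (2/b))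
    (Continuous.aestronglyMeasurable (by continuity)) ?_
  refine ae_of_all _ (fun y => ?_)
  rw [norm_eq_abs, abs_of_nonneg (by positivity)]
  have h1 : y^2 ≤ 2/b * rexp (b/2 * y^2) := by
    have h2 : b/2 * y^2 ≤ rexp (b/2*y^2) := by
      linarith [Real.add_one_le_exp (b/2*y^2)]
    calc y^2 = (2/b) * (b/2 * y^2) := by field_simp
    _ ≤ (2/b) * rexp (b/2*y^2) := mul_le_mul_of_nonneg_left h2 (by positivity)
  calc y^2 * rexp (-b*y^2) ≤ (2/b * rexp (b/2*y^2)) * rexp (-b*y^2) :=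
        mul_le_mul_of_nonneg_right h1 (exp_nonneg _)
  _ = 2/b * rexp (-(b/2) * y^2) := by
      rw [mul_assoc, ← Real.exp_add, show b/2*y^2 + -b*y^2 = -(b/2)*y^2 by ring]

lemma shifted_sq_exp_integrable {b : ℝ} (hb : 0 < b) (e : ℝ) :
    Integrable (fun y : ℝ => (y + e)^2 * rexp (-b * y^2)) := by
  have h : (fun y : ℝ => (y + e)^2 * rexp (-b * y^2))
      = fun y : ℝ => y^2 * rexp (-b*y^2) + (2*e) * (y * rexp (-b*y^2))
          + e^2 * rexp (-b*y^2) := by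
    funext y; ring
  rw [h]
  exact ((sq_mul_exp_integrable hb).add
    ((integrable_mul_exp_neg_mul_sq hb).const_mul (2*e))).add
    ((integrable_exp_neg_mul_sq hb).const_mul (e^2))

lemma integrable_poly_pdf (hv : 0 < (v:ℝ)) (c : ℝ) :
    Integrable (fun z : ℝ => (z + c)^2 * gaussianPDFReal μ v z) := by
  have hb : 0 < (2*(v:ℝ))⁻¹ := by positivity
  have h1 := ((shifted_sq_exp_integrable hb (c + μ)).comp_sub_right μ).const_mul
    (√(2 * π * (v:ℝ)))⁻¹
  refine h1.congr (ae_of_all _ fun z => ?_)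
  simp only [gaussianPDFReal]
  rw [show -(z - μ)^2 / (2*(v:ℝ)) = -(2*(v:ℝ))⁻¹ * (z - μ)^2 by ring]
  ring_nf

end

section
variable {μ : ℝ} {v : ℝ≥0}

lemma gaussian_withDensity (hv : v ≠ 0) :
    gaussianReal μ v
      = volume.withDensity (fun x => ((gaussianPDFReal μ v x).toNNReal : ℝ≥0∞)) := by
  rw [gaussianReal_of_var_ne_zero _ hv]
  rfl

lemma setIntegral_gaussian (hv : v ≠ 0) (f : ℝ → ℝ) {s : Set ℝ} (hs : MeasurableSet s) :
    ∫ z in s, f z ∂(gaussianReal μ v) = ∫ z in s, f z * gaussianPDFReal μ v z := by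
  rw [gaussian_withDensity hv, restrict_withDensity hs,
    integral_withDensity_eq_integral_smul ((measurable_gaussianPDFReal μ v).real_toNNReal) f]
  refine integral_congr_ae (ae_of_all _ fun x => ?_)
  simp [NNReal.smul_def, Real.coe_toNNReal _ (gaussianPDFReal_nonneg μ v x), mul_comm]

lemma integral_gaussian' (hv : v ≠ 0) (f : ℝ → ℝ) :
    ∫ z, f z ∂(gaussianReal μ v) = ∫ z, f z * gaussianPDFReal μ v z := by
  rw [gaussian_withDensity hv,
    integral_withDensity_eq_integral_smul ((measurable_gaussianPDFReal μ v).real_toNNReal) f]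
  refine integral_congr_ae (ae_of_all _ fun x => ?_)
  simp [NNReal.smul_def, Real.coe_toNNReal _ (gaussianPDFReal_nonneg μ v x), mul_comm]

lemma integrable_gaussian_iff (hv : v ≠ 0) (f : ℝ → ℝ) :
    Integrable f (gaussianReal μ v)
      ↔ Integrable (fun z => f z * gaussianPDFReal μ v z) volume := by
  rw [gaussianReal_of_var_ne_zero _ hv,
    integrable_withDensity_iff (measurable_gaussianPDF μ v)
      (ae_of_all _ fun x => ENNReal.ofReal_lt_top)]
  constructor <;> intro h <;> refine h.congr (ae_of_all _ fun x => ?_) <;>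
    simp [gaussianPDF, ENNReal.toReal_ofReal (gaussianPDFReal_nonneg μ v x)]

lemma cdf_gaussian_eq (hv : v ≠ 0) (x : ℝ) :
    cdf (gaussianReal μ v) x = ∫ z in Iic x, gaussianPDFReal μ v z := by
  rw [cdf_eq_real, measureReal_def, gaussianReal_apply_eq_integral _ hv,
    ENNReal.toReal_ofReal (setIntegral_nonneg measurableSet_Iic
      (fun z _ => gaussianPDFReal_nonneg μ v z))]

end

lemma myFTC_Iio {f f' : ℝ → ℝ} {a m : ℝ}
    (hderiv : ∀ x ∈ Iic a, HasDerivAt f (f' x) x)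
    (hint : IntegrableOn f' (Iio a))
    (htend : Tendsto f atBot (nhds m)) :
    ∫ x in Iio a, f' x = f a - m := by
  have hIic : ∫ x in Iio a, f' x = ∫ x in Iic a, f' x :=
    setIntegral_congr_set Iio_ae_eq_Iic
  have hcomp : ∫ x in Ioi (-a), f' (-x) = ∫ x in Iic a, f' x := by
    rw [integral_comp_neg_Ioi, neg_neg]
  have hintIic : IntegrableOn f' (Iic a) :=
    hint.congr_set_ae Iio_ae_eq_Iic.symm
  have h1 : Integrable ((Iic a).indicator f') :=
    (integrable_indicator_iff measurableSet_Iic).2 hintIic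
  have h2 := h1.comp_neg
  have h3 : (fun x => (Iic a).indicator f' (-x))
      = (Ici (-a)).indicator (fun x => f' (-x)) := by
    funext x
    simp [Set.indicator_apply, Set.mem_Iic, Set.mem_Ici, neg_le]
  rw [h3] at h2
  have hint' : IntegrableOn (fun x => -f' (-x)) (Ioi (-a)) :=
    (((integrable_indicator_iff measurableSet_Ici).1 h2).mono_set Ioi_subset_Ici_self).neg
  have hd : ∀ x ∈ Ici (-a), HasDerivAt (fun x => f (-x)) (-f' (-x)) x := by
    intro x hx
    have hmem : -x ∈ Iic a := by simpa using neg_le.1 hx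
    have := (hderiv (-x) hmem).comp x (hasDerivAt_neg x)
    simp [mul_comm] at this; exact this
  have ht : Tendsto (fun x => f (-x)) atTop (nhds m) :=
    htend.comp tendsto_neg_atTop_atBot
  have h := integral_Ioi_of_hasDerivAt_of_tendsto' hd hint' ht
  rw [integral_neg, neg_neg] at h
  have h' : ∫ x in Ioi (-a), f' (-x) = f a - m := by linarith
  rw [hIic, ← hcomp, h']

section
variable {μ : ℝ} {v : ℝ≥0}

lemma lower_tail (hv : 0 < (v:ℝ)) (lam : ℝ) :
    ∫ z in Iio (-lam), (z + lam)^2 * gaussianPDFReal μ v z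
      = ((μ+lam)^2 + v) * (∫ z in Iic (-lam), gaussianPDFReal μ v z)
        - (v:ℝ) * (μ + lam) * gaussianPDFReal μ v (-lam) := by
  set φ := gaussianPDFReal μ v with hφ
  set C : ℝ := (μ+lam)^2 + v with hC
  have hder : ∀ x ∈ Iic (-lam),
      HasDerivAt (fun z => -((v:ℝ) * (z + (μ + 2*lam)) * φ z))
        (((x + (μ+2*lam)) * (x - μ) - v) * φ x) x :=
    fun x _ => G_hasDerivAt hv _ x
  have hI1 : Integrable (fun z : ℝ => (z+lam)^2 * φ z) := integrable_poly_pdf hv lam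
  have hI2 : Integrable (fun z : ℝ => C * φ z) :=
    (integrable_gaussianPDFReal μ v).const_mul C
  have hint : IntegrableOn (fun x => ((x + (μ+2*lam)) * (x - μ) - (v:ℝ)) * φ x) (Iio (-lam)) := by
    refine ((hI1.sub hI2).congr (ae_of_all _ fun x => ?_)).integrableOn
    simp only [Pi.sub_apply, hC]; ring
  have hFTC := myFTC_Iio hder hint (G_tendsto_atBot hv (μ+2*lam))
  simp only [sub_zero] at hFTC
  rw [show (-lam + (μ + 2*lam)) = μ + lam by ring] at hFTC
  have hL : ∫ x in Iio (-lam), ((x+(μ+2*lam))*(x-μ) - (v:ℝ)) * φ x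
      = (∫ x in Iio (-lam), (x+lam)^2*φ x) - C * ∫ x in Iio (-lam), φ x := by
    rw [← integral_const_mul,
      ← integral_sub hI1.integrableOn hI2.integrableOn]
    refine integral_congr_ae (ae_of_all _ fun x => ?_)
    simp only [hC]; ring
  have hkey : ∫ x in Iio (-lam), (x+lam)^2*φ x
      = C * (∫ x in Iio (-lam), φ x) - (v:ℝ) * (μ+lam) * φ (-lam) := by
    linarith [hL, hFTC]
  rw [hkey, setIntegral_congr_set (Iio_ae_eq_Iic (a := -lam))]

lemma upper_tail (hv : 0 < (v:ℝ)) (lam : ℝ) :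
    ∫ z in Ioi lam, (z - lam)^2 * gaussianPDFReal μ v z
      = ((μ-lam)^2 + v) * (1 - ∫ z in Iic lam, gaussianPDFReal μ v z)
        + (v:ℝ) * (μ - lam) * gaussianPDFReal μ v lam := by
  have hvne : v ≠ 0 := by
    intro h; rw [h] at hv; simp at hv
  set φ := gaussianPDFReal μ v with hφ
  set D : ℝ := (μ-lam)^2 + v with hD
  have hder : ∀ x ∈ Ici lam,
      HasDerivAt (fun z => -((v:ℝ) * (z + (μ - 2*lam)) * φ z))
        (((x + (μ-2*lam)) * (x - μ) - v) * φ x) x :=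
    fun x _ => G_hasDerivAt hv _ x
  have hI1 : Integrable (fun z : ℝ => (z-lam)^2 * φ z) := by
    refine (integrable_poly_pdf (μ := μ) hv (-lam)).congr (ae_of_all _ fun x => ?_)
    show (x + -lam)^2 * gaussianPDFReal μ v x = (x - lam)^2 * gaussianPDFReal μ v x; ring_nf
  have hI2 : Integrable (fun z : ℝ => D * φ z) :=
    (integrable_gaussianPDFReal μ v).const_mul D
  have hint : IntegrableOn (fun x => ((x + (μ-2*lam)) * (x - μ) - (v:ℝ)) * φ x) (Ioi lam) := by
    refine ((hI1.sub hI2).congr (ae_of_all _ fun x => ?_)).integrableOn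
    simp only [Pi.sub_apply, hD]; ring
  have hFTC := integral_Ioi_of_hasDerivAt_of_tendsto' hder hint (G_tendsto_atTop hv (μ-2*lam))
  simp only [zero_sub] at hFTC
  rw [show (lam + (μ - 2*lam)) = μ - lam by ring] at hFTC
  have hL : ∫ x in Ioi lam, ((x+(μ-2*lam))*(x-μ) - (v:ℝ)) * φ x
      = (∫ x in Ioi lam, (x-lam)^2*φ x) - D * ∫ x in Ioi lam, φ x := by
    rw [← integral_const_mul,
      ← integral_sub hI1.integrableOn hI2.integrableOn]
    refine integral_congr_ae (ae_of_all _ fun x => ?_)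
    simp only [hD]; ring
  have hcompl : (∫ z in Iic lam, φ z) + (∫ z in Ioi lam, φ z) = 1 := by
    have h := integral_add_compl (measurableSet_Iic (a := lam))
      (integrable_gaussianPDFReal μ v)
    rw [compl_Iic] at h
    rw [h]
    exact integral_gaussianPDFReal_eq_one μ hvne
  have : ∫ x in Ioi lam, (x-lam)^2*φ x
      = D * (∫ x in Ioi lam, φ x) + (v:ℝ) * (μ-lam) * φ lam := by
    linarith [hL, hFTC]
  rw [this]
  have h2 : ∫ x in Ioi lam, φ x = 1 - ∫ z in Iic lam, φ z := by linarith [hcompl]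
  rw [h2]

end

/-- variance of the soft-thresholded Gaussian. For `Z ~ N(μ, σ²)` with `σ² > 0`
and `λ ≥ 0`, with `Var(S_λ(Z)) = E[S_λ(Z)²] − (E[S_λ(Z)])²`:
`Var(S_λ(Z)) = 2(μ² + σ² + λ²) − ((μ + λ)² + σ²)(1 − Φ(−λ)) − ((μ − λ)² + σ²)Φ(λ)
  − (μ + λ)σ²φ(−λ) + (μ − λ)σ²φ(λ) − (E[S_λ(Z)])²`,
where `Φ = Φ_{μ,σ²}` and `φ = φ_{μ,σ²}` are the CDF and density of `N(μ, σ²)`. -/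
theorem softThreshold_gaussian_variance (μ s2 lam : ℝ) (hs2 : 0 < s2) (hlam : 0 ≤ lam) :
    (∫ z, softThreshold lam z ^ 2 ∂(gaussianReal μ s2.toNNReal)) -
        (∫ z, softThreshold lam z ∂(gaussianReal μ s2.toNNReal)) ^ 2 =
      2 * (μ ^ 2 + s2 + lam ^ 2)
        - ((μ + lam) ^ 2 + s2) * (1 - cdf (gaussianReal μ s2.toNNReal) (-lam))
        - ((μ - lam) ^ 2 + s2) * cdf (gaussianReal μ s2.toNNReal) lam
        - (μ + lam) * s2 * gaussianPDFReal μ s2.toNNReal (-lam)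
        + (μ - lam) * s2 * gaussianPDFReal μ s2.toNNReal lam
        - (∫ z, softThreshold lam z ∂(gaussianReal μ s2.toNNReal)) ^ 2 := by
  have hvc : ((s2.toNNReal : ℝ≥0) : ℝ) = s2 := Real.coe_toNNReal _ hs2.le
  have hv : 0 < ((s2.toNNReal : ℝ≥0) : ℝ) := by rw [hvc]; exact hs2
  have hvne : s2.toNNReal ≠ 0 := by
    intro h; rw [h] at hv; simp at hv
  congr 1
  have hpt : ∀ z : ℝ, softThreshold lam z ^ 2
      = (Iio (-lam)).indicator (fun z => (z+lam)^2) z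
        + (Ioi lam).indicator (fun z => (z-lam)^2) z := by
    intro z
    by_cases h1 : z < -lam
    · have h2 : ¬ lam < z := by linarith
      simp [softThreshold, h1, h2, Set.indicator_apply]
    · by_cases h3 : z ≤ lam
      · have h4 : ¬ lam < z := not_lt.2 h3
        simp [softThreshold, h1, h3, h4, Set.indicator_apply]
      · have h5 : lam < z := not_le.1 h3
        simp [softThreshold, h1, h3, h5, Set.indicator_apply]
  have hIp : Integrable (fun z : ℝ => (z-lam)^2 * gaussianPDFReal μ s2.toNNReal z) := by
    refine (integrable_poly_pdf (μ := μ) hv (-lam)).congr (ae_of_all _ fun x => ?_)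
    show (x + -lam)^2 * gaussianPDFReal μ s2.toNNReal x
      = (x - lam)^2 * gaussianPDFReal μ s2.toNNReal x
    ring_nf
  have hint1 : Integrable ((Iio (-lam)).indicator (fun z : ℝ => (z+lam)^2))
      (gaussianReal μ s2.toNNReal) :=
    (integrable_indicator_iff measurableSet_Iio).2
      (((integrable_gaussian_iff hvne _).2 (integrable_poly_pdf hv lam)).integrableOn)
  have hint2 : Integrable ((Ioi lam).indicator (fun z : ℝ => (z-lam)^2))
      (gaussianReal μ s2.toNNReal) :=
    (integrable_indicator_iff measurableSet_Ioi).2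
      (((integrable_gaussian_iff hvne _).2 hIp).integrableOn)
  calc ∫ z, softThreshold lam z ^ 2 ∂(gaussianReal μ s2.toNNReal)
      = ∫ z, ((Iio (-lam)).indicator (fun z => (z+lam)^2) z
          + (Ioi lam).indicator (fun z => (z-lam)^2) z) ∂(gaussianReal μ s2.toNNReal) :=
        integral_congr_ae (ae_of_all _ hpt)
    _ = (∫ z, (Iio (-lam)).indicator (fun z => (z+lam)^2) z ∂(gaussianReal μ s2.toNNReal))
          + ∫ z, (Ioi lam).indicator (fun z => (z-lam)^2) z ∂(gaussianReal μ s2.toNNReal) :=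
        integral_add hint1 hint2
    _ = (∫ z in Iio (-lam), (z+lam)^2 ∂(gaussianReal μ s2.toNNReal))
          + ∫ z in Ioi lam, (z-lam)^2 ∂(gaussianReal μ s2.toNNReal) := by
        rw [integral_indicator measurableSet_Iio, integral_indicator measurableSet_Ioi]
    _ = (∫ z in Iio (-lam), (z+lam)^2 * gaussianPDFReal μ s2.toNNReal z)
          + ∫ z in Ioi lam, (z-lam)^2 * gaussianPDFReal μ s2.toNNReal z := by
        rw [setIntegral_gaussian hvne _ measurableSet_Iio,
          setIntegral_gaussian hvne _ measurableSet_Ioi]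
    _ = _ := by
        rw [lower_tail hv lam, upper_tail hv lam,
          ← cdf_gaussian_eq hvne (-lam), ← cdf_gaussian_eq hvne lam, hvc]
        ring
end

section
/- Let (Ω, F, P) be a probability space, ψ₀ ∈ ℝ and σ₀² > 0. Let ψ_n : Ω → ℝ be random variables with √n(ψ_n − ψ₀) converging in distribution to N(0, σ₀²); let σ_n² : Ω → (0, ∞) be random variables with σ_n² → σ₀² in probability; and let γ_n : Ω → [0, ∞) be random variables converging in probability to a finite constant γ_∞ ≥ 0. Set λ_n* = γ_n/n and ψ̃_n = ψ_n/(1 + λ_n*). Then for every q > 0, the coverage of the interval [ψ̃_n − q σ_n/√n, ψ̃_n + q σ_n/√n] satisfies P(|ψ̃_n − ψ₀| ≤ q σ_n/√n) → Φ_{0,1}(q) − Φ_{0,1}(−q) as n → ∞, where σ_n = √(σ_n²) and Φ_{0,1} is the standard normal cumulative distribution function. -/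
open MeasureTheory ProbabilityTheory Filter
open scoped Topology

/- ### Auxiliary lemmas -/

private lemma aux_abs_sqrt_sub_sqrt {x y : ℝ} (hx : 0 ≤ x) (hy : 0 ≤ y) :
    |Real.sqrt x - Real.sqrt y| ≤ Real.sqrt |x - y| := by
  apply Real.abs_le_sqrt
  rcases le_total y x with h | h
  · have h1 : Real.sqrt y ≤ Real.sqrt x := Real.sqrt_le_sqrt h
    have h2 : 0 ≤ Real.sqrt y := Real.sqrt_nonneg y
    have h3 : Real.sqrt x * Real.sqrt x = x := Real.mul_self_sqrt hx
    have h4 : Real.sqrt y * Real.sqrt y = y := Real.mul_self_sqrt hy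
    rw [abs_of_nonneg (sub_nonneg.mpr h)]
    nlinarith [mul_le_mul_of_nonneg_right h1 h2]
  · have h1 : Real.sqrt x ≤ Real.sqrt y := Real.sqrt_le_sqrt h
    have h2 : 0 ≤ Real.sqrt x := Real.sqrt_nonneg x
    have h3 : Real.sqrt x * Real.sqrt x = x := Real.mul_self_sqrt hx
    have h4 : Real.sqrt y * Real.sqrt y = y := Real.mul_self_sqrt hy
    rw [abs_of_nonpos (sub_nonpos.mpr h)]
    nlinarith [mul_le_mul_of_nonneg_right h1 h2]

private lemma aux_sqrt_atTop : Tendsto (fun n : ℕ => Real.sqrt n) atTop atTop := by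
  apply tendsto_atTop_atTop.mpr
  intro b
  refine ⟨⌈b^2⌉₊, fun n hn => ?_⟩
  have h1 : (b^2 : ℝ) ≤ n := le_trans (Nat.le_ceil _) (by exact_mod_cast hn)
  calc b ≤ |b| := le_abs_self b
  _ = Real.sqrt (b^2) := (Real.sqrt_sq_eq_abs b).symm
  _ ≤ Real.sqrt n := Real.sqrt_le_sqrt h1

/-- The pointwise rewriting of the confidence-interval event as a two-sided bound on
`√n (ψ - ψ₀)`. -/
private lemma aux_event_iff (n : ℕ) (hn : 1 ≤ n) (γ s2 ψv ψ₀ q : ℝ) (hγ : 0 ≤ γ)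
    (hs2 : 0 < s2) :
    (|(1 + γ / n)⁻¹ * ψv - ψ₀| ≤ q * Real.sqrt s2 / Real.sqrt n) ↔
    (ψ₀ * γ / Real.sqrt n - q * Real.sqrt s2 * (1 + γ / n) ≤ Real.sqrt n * (ψv - ψ₀) ∧
     Real.sqrt n * (ψv - ψ₀) ≤ ψ₀ * γ / Real.sqrt n + q * Real.sqrt s2 * (1 + γ / n)) := by
  have hnpos : (0:ℝ) < n := by exact_mod_cast hn
  set t : ℝ := Real.sqrt n with htdef
  have ht : 0 < t := Real.sqrt_pos.mpr hnpos
  have htn : (n:ℝ) = t * t := (Real.mul_self_sqrt (le_of_lt hnpos)).symm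
  set s : ℝ := Real.sqrt s2 with hsdef
  have hs : 0 < s := Real.sqrt_pos.mpr hs2
  have hlam : 0 < 1 + γ / (n:ℝ) := by positivity
  have hden : 0 < t * (1 + γ / (n:ℝ)) := by positivity
  have h1 : (1 + γ / (n:ℝ))⁻¹ * ψv - ψ₀
      = (t*(ψv - ψ₀) - ψ₀*γ/t) / (t*(1 + γ/(n:ℝ))) := by
    rw [htn]
    field_simp
    ring
  have h2 : q * s / t = (q*s*(1 + γ/(n:ℝ))) / (t*(1 + γ/(n:ℝ))) := by
    field_simp
  rw [h1, h2, abs_div, abs_of_pos hden, div_le_div_iff_of_pos_right hden, abs_le]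
  constructor
  · rintro ⟨hl, hr⟩; constructor <;> linarith
  · rintro ⟨hl, hr⟩; constructor <;> linarith

/-- On the good event and for large `n`, the (random) endpoints of the rescaled interval are
`ε`-close to `∓ q σ₀`. -/
private lemma aux_center_bound {σ0sq γlim ψ₀ q ε : ℝ} (hσ0sq : 0 < σ0sq) (hq : 0 < q)
    (hε0 : 0 ≤ ε) (n : ℕ) (γ s2 : ℝ) (hγ0 : 0 ≤ γ) (hs2 : 0 < s2)
    (hγg : |γ - γlim| ≤ 1) (hσg : |s2 - σ0sq| ≤ (ε/(4*q))^2)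
    (hc1 : |ψ₀| * (γlim+1) / Real.sqrt n ≤ ε/4)
    (hc2 : (γlim+1) / (n:ℝ) ≤ 1)
    (hc3 : q * Real.sqrt σ0sq * ((γlim+1) / (n:ℝ)) ≤ ε/4)
    (hn : 1 ≤ n) :
    |ψ₀ * γ / Real.sqrt n - q * Real.sqrt s2 * (1 + γ/(n:ℝ)) - (-(q * Real.sqrt σ0sq))| ≤ ε ∧
    |ψ₀ * γ / Real.sqrt n + q * Real.sqrt s2 * (1 + γ/(n:ℝ)) - q * Real.sqrt σ0sq| ≤ ε := by
  have hε : 0 ≤ ε / (4*q) := by positivity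
  have hnpos : (0:ℝ) < n := by exact_mod_cast hn
  set t : ℝ := Real.sqrt n with htdef
  have ht : 0 < t := Real.sqrt_pos.mpr hnpos
  set s : ℝ := Real.sqrt s2 with hsdef
  set σ₀ : ℝ := Real.sqrt σ0sq with hσ₀def
  have hσ₀ : 0 < σ₀ := Real.sqrt_pos.mpr hσ0sq
  have hγle : γ ≤ γlim + 1 := by have := abs_le.mp hγg; linarith [this.2]
  have hst : |s - σ₀| ≤ ε / (4*q) := by
    calc |s - σ₀| ≤ Real.sqrt |s2 - σ0sq| := aux_abs_sqrt_sub_sqrt hs2.le hσ0sq.le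
    _ ≤ Real.sqrt ((ε/(4*q))^2) := Real.sqrt_le_sqrt hσg
    _ = ε/(4*q) := by rw [Real.sqrt_sq hε]
  have hγn0 : 0 ≤ γ / (n:ℝ) := by positivity
  have hγn1 : γ / (n:ℝ) ≤ 1 := le_trans (by gcongr) hc2
  set u : ℝ := ψ₀ * γ / t with hu
  set v : ℝ := q * (s - σ₀) * (1 + γ/(n:ℝ)) with hv
  set w : ℝ := q * σ₀ * (γ/(n:ℝ)) with hw
  have hU : |u| ≤ ε/4 := by
    have : |u| = |ψ₀| * γ / t := by
      rw [hu, abs_div, abs_mul, abs_of_nonneg hγ0, abs_of_pos ht]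
    rw [this]
    calc |ψ₀| * γ / t ≤ |ψ₀| * (γlim+1) / t := by gcongr
    _ ≤ ε/4 := hc1
  have hV : |v| ≤ ε/2 := by
    have : |v| = q * |s - σ₀| * (1 + γ/(n:ℝ)) := by
      rw [hv, abs_mul, abs_mul, abs_of_pos hq,
        abs_of_pos (by positivity : (0:ℝ) < 1 + γ/(n:ℝ))]
    rw [this]
    have hst' : |s - σ₀| * (4*q) ≤ ε := by
      rw [← le_div_iff₀ (by positivity)]; exact hst
    nlinarith [abs_nonneg (s - σ₀),
      mul_le_mul_of_nonneg_left hγn1 (mul_nonneg hq.le (abs_nonneg (s-σ₀)))]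
  have hW : |w| ≤ ε/4 := by
    have : |w| = q * σ₀ * (γ/(n:ℝ)) := by
      rw [hw, abs_of_nonneg (by positivity)]
    rw [this]
    calc q * σ₀ * (γ/(n:ℝ)) ≤ q * σ₀ * ((γlim+1)/(n:ℝ)) := by gcongr
    _ ≤ ε/4 := hc3
  have hAeq : ψ₀ * γ / t - q * s * (1 + γ/(n:ℝ)) - (-(q * σ₀)) = u - v - w := by
    rw [hu, hv, hw]; ring
  have hBeq : ψ₀ * γ / t + q * s * (1 + γ/(n:ℝ)) - q * σ₀ = u + v + w := by
    rw [hu, hv, hw]; ring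
  rw [hAeq, hBeq]
  obtain ⟨u1, u2⟩ := abs_le.mp hU
  obtain ⟨v1, v2⟩ := abs_le.mp hV
  obtain ⟨w1, w2⟩ := abs_le.mp hW
  constructor <;> (rw [abs_le]; constructor <;> linarith)

/-- Union bound, in real-number form. -/
private lemma aux_meas_le3 {Ω : Type*} [MeasurableSpace Ω] (P : Measure Ω)
    [IsProbabilityMeasure P] {S T B1 B2 : Set Ω} (h : S ⊆ T ∪ (B1 ∪ B2)) :
    (P S).toReal ≤ (P T).toReal + (P B1).toReal + (P B2).toReal := by
  have hle : P S ≤ P T + P B1 + P B2 := by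
    calc P S ≤ P (T ∪ (B1 ∪ B2)) := measure_mono h
    _ ≤ P T + P (B1 ∪ B2) := measure_union_le _ _
    _ ≤ P T + (P B1 + P B2) := by gcongr; exact measure_union_le _ _
    _ = P T + P B1 + P B2 := by rw [add_assoc]
  calc (P S).toReal ≤ (P T + P B1 + P B2).toReal :=
        ENNReal.toReal_mono (by finiteness) hle
  _ = _ := by
      rw [ENNReal.toReal_add (by finiteness) (measure_ne_top _ _),
        ENNReal.toReal_add (measure_ne_top _ _) (measure_ne_top _ _)]

/-- Weak convergence gives convergence of the probabilities of closed intervals with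
atomless-limit endpoints. -/
private lemma aux_interval_tendsto {Ω : Type*} [MeasurableSpace Ω] (P : Measure Ω)
    [IsProbabilityMeasure P] (Z : ℕ → Ω → ℝ) (hZmeas : ∀ n, Measurable (Z n))
    (ν : Measure ℝ) [IsProbabilityMeasure ν]
    (hdist : ∀ f : BoundedContinuousFunction ℝ ℝ,
      Tendsto (fun n => ∫ ω, f (Z n ω) ∂P) atTop (𝓝 (∫ x, f x ∂ν)))
    (hatom : ∀ x : ℝ, ν {x} = 0)
    {x y : ℝ} (hxy : x < y) :
    Tendsto (fun n => (P (Z n ⁻¹' Set.Icc x y)).toReal) atTop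
      (𝓝 ((ν (Set.Icc x y)).toReal)) := by
  let μ : ℕ → ProbabilityMeasure ℝ := fun n =>
    ⟨P.map (Z n), Measure.isProbabilityMeasure_map (hZmeas n).aemeasurable⟩
  let νP : ProbabilityMeasure ℝ := ⟨ν, inferInstance⟩
  have hμtends : Tendsto μ atTop (𝓝 νP) := by
    rw [ProbabilityMeasure.tendsto_iff_forall_integral_tendsto]
    intro f
    have heq : ∀ n, ∫ ω, f ω ∂((μ n : Measure ℝ)) = ∫ ω, f (Z n ω) ∂P := fun n =>
      integral_map (hZmeas n).aemeasurable f.continuous.aestronglyMeasurable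
    simp only [heq]
    exact hdist f
  have hnull : (νP : Measure ℝ) (frontier (Set.Icc x y)) = 0 := by
    rw [frontier_Icc hxy.le]
    have h1 : ν ({x, y} : Set ℝ) ≤ ν {x} + ν {y} := by
      rw [Set.insert_eq]; exact measure_union_le _ _
    rw [hatom x, hatom y, add_zero] at h1
    exact le_antisymm h1 (by simp)
  have h := ProbabilityMeasure.tendsto_measure_of_null_frontier_of_tendsto' hμtends hnull
  have heq2 : ∀ n, (μ n : Measure ℝ) (Set.Icc x y) = P (Z n ⁻¹' Set.Icc x y) := fun n =>
    Measure.map_apply (hZmeas n) measurableSet_Icc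
  simp only [heq2] at h
  exact (ENNReal.tendsto_toReal (measure_ne_top _ _)).comp h

/-- Continuity of the measure of slightly enlarged / shrunk intervals. -/
private lemma aux_shrink (ν : Measure ℝ) [IsProbabilityMeasure ν] (a b : ℝ)
    (hatom : ∀ x : ℝ, ν {x} = 0) :
    Tendsto (fun k : ℕ => (ν (Set.Icc (a - 1/(k+1)) (b + 1/(k+1)))).toReal) atTop
      (𝓝 ((ν (Set.Icc a b)).toReal)) ∧
    Tendsto (fun k : ℕ => (ν (Set.Icc (a + 1/(k+1)) (b - 1/(k+1)))).toReal) atTop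
      (𝓝 ((ν (Set.Icc a b)).toReal)) := by
  have hmono : ∀ (k m : ℕ), k ≤ m → (1:ℝ)/(m+1) ≤ 1/(k+1) := by
    intro k m hkm
    apply one_div_le_one_div_of_le (by positivity)
    have : (k:ℝ) ≤ m := by exact_mod_cast hkm
    linarith
  constructor
  · have hiint : (⋂ k : ℕ, Set.Icc (a - 1/((k:ℝ)+1)) (b + 1/((k:ℝ)+1))) = Set.Icc a b := by
      ext z
      simp only [Set.mem_iInter, Set.mem_Icc]
      constructor
      · intro h
        constructor
        · refine le_of_forall_pos_le_add fun ε hε => ?_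
          obtain ⟨k, hk⟩ := exists_nat_one_div_lt hε
          have := (h k).1
          linarith
        · refine le_of_forall_pos_le_add fun ε hε => ?_
          obtain ⟨k, hk⟩ := exists_nat_one_div_lt hε
          have := (h k).2
          linarith
      · intro h k
        have : (0:ℝ) < 1/((k:ℝ)+1) := by positivity
        exact ⟨by linarith [h.1], by linarith [h.2]⟩
    have h := tendsto_measure_iInter_atTop (μ := ν)
      (s := fun k : ℕ => Set.Icc (a - 1/((k:ℝ)+1)) (b + 1/((k:ℝ)+1)))
      (fun k => measurableSet_Icc.nullMeasurableSet)
      (fun k m hkm => Set.Icc_subset_Icc (by linarith [hmono k m hkm])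
        (by linarith [hmono k m hkm]))
      ⟨0, measure_ne_top _ _⟩
    rw [hiint] at h
    exact (ENNReal.tendsto_toReal (measure_ne_top _ _)).comp h
  · have hioo : ν (Set.Ioo a b) = ν (Set.Icc a b) := by
      refine le_antisymm (measure_mono Set.Ioo_subset_Icc_self) ?_
      have hsub : Set.Icc a b ⊆ Set.Ioo a b ∪ ({a} ∪ {b}) := by
        intro z hz
        rcases eq_or_lt_of_le hz.1 with h1 | h1
        · exact Or.inr (Or.inl (by simp [← h1]))
        rcases eq_or_lt_of_le hz.2 with h2 | h2
        · exact Or.inr (Or.inr (by simp [h2]))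
        exact Or.inl ⟨h1, h2⟩
      calc ν (Set.Icc a b) ≤ ν (Set.Ioo a b ∪ ({a} ∪ {b})) := measure_mono hsub
      _ ≤ ν (Set.Ioo a b) + ν ({a} ∪ {b}) := measure_union_le _ _
      _ ≤ ν (Set.Ioo a b) + (ν {a} + ν {b}) := by gcongr; exact measure_union_le _ _
      _ = ν (Set.Ioo a b) := by rw [hatom, hatom]; simp
    have hiun : (⋃ k : ℕ, Set.Icc (a + 1/((k:ℝ)+1)) (b - 1/((k:ℝ)+1))) = Set.Ioo a b := by
      ext z
      simp only [Set.mem_iUnion, Set.mem_Icc, Set.mem_Ioo]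
      constructor
      · rintro ⟨k, h1, h2⟩
        have : (0:ℝ) < 1/((k:ℝ)+1) := by positivity
        exact ⟨by linarith, by linarith⟩
      · rintro ⟨h1, h2⟩
        obtain ⟨k, hk⟩ := exists_nat_one_div_lt (lt_min_iff.mpr ⟨sub_pos.mpr h1, sub_pos.mpr h2⟩)
        rw [lt_min_iff] at hk
        exact ⟨k, by linarith [hk.1], by linarith [hk.2]⟩
    have h := tendsto_measure_iUnion_atTop (μ := ν)
      (s := fun k : ℕ => Set.Icc (a + 1/((k:ℝ)+1)) (b - 1/((k:ℝ)+1)))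
      (fun k m hkm => Set.Icc_subset_Icc (by linarith [hmono k m hkm])
        (by linarith [hmono k m hkm]))
    rw [hiun, hioo] at h
    exact (ENNReal.tendsto_toReal (measure_ne_top _ _)).comp h

/-- Identification of the limit constant. -/
private lemma aux_limit_const {σ0sq q : ℝ} (hσ0sq : 0 < σ0sq) (hq : 0 < q) :
    cdf (gaussianReal 0 1) q - cdf (gaussianReal 0 1) (-q)
      = ((gaussianReal 0 σ0sq.toNNReal)
          (Set.Icc (-(q * Real.sqrt σ0sq)) (q * Real.sqrt σ0sq))).toReal := by
  set σ₀ : ℝ := Real.sqrt σ0sq with hσ₀def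
  have hσ₀ : 0 < σ₀ := Real.sqrt_pos.mpr hσ0sq
  set N1 : Measure ℝ := gaussianReal 0 1 with hN1
  have hatom1 : ∀ x : ℝ, N1 {x} = 0 := fun x =>
    gaussianReal_absolutelyContinuous 0 one_ne_zero (measure_singleton x)
  have hmap : gaussianReal 0 σ0sq.toNNReal = N1.map (fun x => σ₀ * x) := by
    rw [hN1, gaussianReal_map_const_mul σ₀]
    congr 1
    · ring
    · ext
      simp only [NNReal.coe_mul, NNReal.coe_one, NNReal.coe_mk, mul_one]
      rw [Real.coe_toNNReal _ hσ0sq.le, Real.sq_sqrt hσ0sq.le]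
  have hpre : (fun x => σ₀ * x) ⁻¹' Set.Icc (-(q * σ₀)) (q * σ₀) = Set.Icc (-q) q := by
    rw [show -(q * σ₀) = σ₀ * (-q) by ring, show q * σ₀ = σ₀ * q by ring]
    ext z
    simp only [Set.mem_preimage, Set.mem_Icc]
    constructor
    · rintro ⟨h1, h2⟩
      exact ⟨le_of_mul_le_mul_left h1 hσ₀, le_of_mul_le_mul_left h2 hσ₀⟩
    · rintro ⟨h1, h2⟩
      exact ⟨mul_le_mul_of_nonneg_left h1 hσ₀.le, mul_le_mul_of_nonneg_left h2 hσ₀.le⟩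
  have h1 : gaussianReal 0 σ0sq.toNNReal (Set.Icc (-(q * σ₀)) (q * σ₀))
      = N1 (Set.Icc (-q) q) := by
    rw [hmap, Measure.map_apply (measurable_const_mul σ₀) measurableSet_Icc, hpre]
  have hsplit : N1 (Set.Iic q) = N1 (Set.Iio (-q)) + N1 (Set.Icc (-q) q) := by
    rw [← Set.Iio_union_Icc_eq_Iic (by linarith : -q ≤ q)]
    exact measure_union
      ((Set.Iio_disjoint_Ici (le_refl (-q))).mono_right Set.Icc_subset_Ici_self)
      measurableSet_Icc
  have hio : N1 (Set.Iio (-q)) = N1 (Set.Iic (-q)) := by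
    have h2 : N1 (Set.Iic (-q)) = N1 (Set.Iio (-q)) + N1 {(-q)} := by
      rw [← Set.Iio_union_right]
      exact measure_union (by simp) (measurableSet_singleton _)
    rw [h2, hatom1, add_zero]
  rw [h1, cdf_eq_real, cdf_eq_real, measureReal_def, measureReal_def]
  rw [hsplit, hio, ENNReal.toReal_add (measure_ne_top _ _) (measure_ne_top _ _)]
  ring

/-- asymptotic validity of the confidence interval centered at the L2-penalized
estimator `ψ̃_n = ψ_n/(1 + γ_n/n)`. If `√n(ψ_n − ψ₀) →d N(0, σ₀²)`, `σ_n² →p σ₀² > 0`, and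
`γ_n →p γ_∞ ∈ [0, ∞)`, then for every `q > 0`,
`P(|ψ̃_n − ψ₀| ≤ q σ_n/√n) → Φ_{0,1}(q) − Φ_{0,1}(−q)`. -/
theorem l2_penalized_confidence_interval_asymptotic_coverage
    {Ω : Type*} [MeasurableSpace Ω] (P : Measure Ω) [IsProbabilityMeasure P]
    (ψ₀ : ℝ) (σ0sq : ℝ) (hσ0sq : 0 < σ0sq)
    (ψn : ℕ → Ω → ℝ) (hψmeas : ∀ n, Measurable (ψn n))
    (hdist : TendstoInDistribution P (fun n ω => Real.sqrt n * (ψn n ω - ψ₀))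
      (gaussianReal 0 σ0sq.toNNReal))
    (σ2n : ℕ → Ω → ℝ) (hσmeas : ∀ n, Measurable (σ2n n)) (hσpos : ∀ n ω, 0 < σ2n n ω)
    (hσprob : TendstoInProbability P σ2n σ0sq)
    (γn : ℕ → Ω → ℝ) (hγmeas : ∀ n, Measurable (γn n)) (hγnonneg : ∀ n ω, 0 ≤ γn n ω)
    (γlim : ℝ) (hγlim : 0 ≤ γlim) (hγprob : TendstoInProbability P γn γlim)
    (q : ℝ) (hq : 0 < q) :
    Tendsto (fun n =>
        (P {ω | |(1 + γn n ω / n)⁻¹ * ψn n ω - ψ₀| ≤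
          q * Real.sqrt (σ2n n ω) / Real.sqrt n}).toReal)
      atTop (𝓝 (cdf (gaussianReal 0 1) q - cdf (gaussianReal 0 1) (-q))) := by
  classical
  have hσ₀ : 0 < Real.sqrt σ0sq := Real.sqrt_pos.mpr hσ0sq
  have hb : 0 < q * Real.sqrt σ0sq := by positivity
  set ν : Measure ℝ := gaussianReal 0 σ0sq.toNNReal with hνdef
  have hvne : σ0sq.toNNReal ≠ 0 := (Real.toNNReal_pos.mpr hσ0sq).ne'
  have hatom : ∀ x : ℝ, ν {x} = 0 := fun x =>
    gaussianReal_absolutelyContinuous 0 hvne (measure_singleton x)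
  set a : ℝ := -(q * Real.sqrt σ0sq) with hadef
  set b : ℝ := q * Real.sqrt σ0sq with hbdef
  set Z : ℕ → Ω → ℝ := fun n ω => Real.sqrt n * (ψn n ω - ψ₀) with hZdef
  have hZmeas : ∀ n, Measurable (Z n) := fun n =>
    measurable_const.mul ((hψmeas n).sub measurable_const)
  have hIccR : ∀ x y : ℝ, x < y →
      Tendsto (fun n => (P (Z n ⁻¹' Set.Icc x y)).toReal) atTop
        (𝓝 ((ν (Set.Icc x y)).toReal)) := fun x y hxy =>
    aux_interval_tendsto P Z hZmeas ν hdist hatom hxy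
  rw [aux_limit_const hσ0sq hq]
  rw [Metric.tendsto_nhds]
  intro ε' hε'
  set ℓ : ℝ := (ν (Set.Icc a b)).toReal with hldef
  obtain ⟨hout, hinn⟩ := aux_shrink ν a b hatom
  have hev1 := (Metric.tendsto_nhds.mp hout) (ε'/8) (by positivity)
  have hev2 := (Metric.tendsto_nhds.mp hinn) (ε'/8) (by positivity)
  have hev3 : ∀ᶠ k : ℕ in atTop, 1/((k:ℝ)+1) < b :=
    tendsto_one_div_add_atTop_nhds_zero_nat.eventually (gt_mem_nhds hb)
  obtain ⟨k, hk12, hk3⟩ := ((hev1.and hev2).and hev3).exists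
  obtain ⟨hk1, hk2⟩ := hk12
  set ε : ℝ := 1/((k:ℝ)+1) with hεdef
  have hε : 0 < ε := by positivity
  have hεb : ε < b := hk3
  have hνout : (ν (Set.Icc (a-ε) (b+ε))).toReal < ℓ + ε'/8 := by
    rw [Real.dist_eq] at hk1
    have := (abs_sub_lt_iff.mp hk1).1
    linarith
  have hνinn : ℓ - ε'/8 < (ν (Set.Icc (a+ε) (b-ε))).toReal := by
    rw [Real.dist_eq] at hk2
    have := (abs_sub_lt_iff.mp hk2).2
    linarith
  have habout : a - ε < b + ε := by
    have : a < b := by rw [hadef, hbdef]; linarith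
    linarith
  have habin : a + ε < b - ε := by
    rw [hadef, hbdef]; linarith
  have hout_n := hIccR (a-ε) (b+ε) habout
  have hinn_n := hIccR (a+ε) (b-ε) habin
  have hev4 : ∀ᶠ n in atTop,
      (P (Z n ⁻¹' Set.Icc (a-ε) (b+ε))).toReal < (ν (Set.Icc (a-ε) (b+ε))).toReal + ε'/8 :=
    hout_n.eventually (gt_mem_nhds (by linarith))
  have hev5 : ∀ᶠ n in atTop,
      (ν (Set.Icc (a+ε) (b-ε))).toReal - ε'/8 < (P (Z n ⁻¹' Set.Icc (a+ε) (b-ε))).toReal :=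
    hinn_n.eventually (lt_mem_nhds (by linarith))
  -- bad events
  set δ : ℝ := (ε/(4*q))^2 with hδdef
  have hδ : 0 < δ := by positivity
  have hb1R : Tendsto (fun n => (P {ω | δ < ‖σ2n n ω - σ0sq‖}).toReal) atTop (𝓝 0) := by
    have := (ENNReal.tendsto_toReal ENNReal.zero_ne_top).comp (hσprob δ hδ)
    exact this
  have hb2R : Tendsto (fun n => (P {ω | 1 < ‖γn n ω - γlim‖}).toReal) atTop (𝓝 0) := by
    have := (ENNReal.tendsto_toReal ENNReal.zero_ne_top).comp (hγprob 1 one_pos)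
    exact this
  have hev6 : ∀ᶠ n in atTop, (P {ω | δ < ‖σ2n n ω - σ0sq‖}).toReal < ε'/8 :=
    hb1R.eventually (gt_mem_nhds (by positivity))
  have hev7 : ∀ᶠ n in atTop, (P {ω | 1 < ‖γn n ω - γlim‖}).toReal < ε'/8 :=
    hb2R.eventually (gt_mem_nhds (by positivity))
  -- deterministic eventual bounds
  have hc1ev : ∀ᶠ n : ℕ in atTop, |ψ₀| * (γlim+1) / Real.sqrt n ≤ ε/4 := by
    have h := aux_sqrt_atTop.const_div_atTop (|ψ₀| * (γlim+1))
    exact (h.eventually (gt_mem_nhds (by positivity : (0:ℝ) < ε/4))).mono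
      fun n hn => hn.le
  have hc2ev : ∀ᶠ n : ℕ in atTop, (γlim+1) / (n:ℝ) ≤ 1 := by
    have h := (tendsto_natCast_atTop_atTop : Tendsto (fun n : ℕ => (n:ℝ)) atTop atTop).const_div_atTop (γlim+1)
    exact (h.eventually (gt_mem_nhds one_pos)).mono fun n hn => hn.le
  have hc3ev : ∀ᶠ n : ℕ in atTop,
      q * Real.sqrt σ0sq * ((γlim+1) / (n:ℝ)) ≤ ε/4 := by
    have h0 := (tendsto_natCast_atTop_atTop : Tendsto (fun n : ℕ => (n:ℝ)) atTop atTop).const_div_atTop (γlim+1)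
    have h : Tendsto (fun n : ℕ => q * Real.sqrt σ0sq * ((γlim+1) / (n:ℝ))) atTop (𝓝 0) := by
      have := h0.const_mul (q * Real.sqrt σ0sq)
      simpa using this
    exact (h.eventually (gt_mem_nhds (by positivity : (0:ℝ) < ε/4))).mono fun n hn => hn.le
  have hn1 : ∀ᶠ n : ℕ in atTop, 1 ≤ n := eventually_ge_atTop 1
  filter_upwards [hev4, hev5, hev6, hev7, hc1ev, hc2ev, hc3ev, hn1]
    with n h4 h5 h6 h7 hc1 hc2 hc3 hn
  set E : Set Ω := {ω | |(1 + γn n ω / n)⁻¹ * ψn n ω - ψ₀| ≤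
      q * Real.sqrt (σ2n n ω) / Real.sqrt n} with hEdef
  set B1 : Set Ω := {ω | δ < ‖σ2n n ω - σ0sq‖} with hB1def
  set B2 : Set Ω := {ω | 1 < ‖γn n ω - γlim‖} with hB2def
  -- pointwise good case analysis
  have hgood : ∀ ω, ω ∉ B1 → ω ∉ B2 →
      (|ψ₀ * γn n ω / Real.sqrt n - q * Real.sqrt (σ2n n ω) * (1 + γn n ω/(n:ℝ)) - a| ≤ ε ∧
       |ψ₀ * γn n ω / Real.sqrt n + q * Real.sqrt (σ2n n ω) * (1 + γn n ω/(n:ℝ)) - b| ≤ ε) := by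
    intro ω hg1 hg2
    have hσg : |σ2n n ω - σ0sq| ≤ δ := by
      rw [← Real.norm_eq_abs]
      exact not_lt.mp (fun h => hg1 h)
    have hγg : |γn n ω - γlim| ≤ 1 := by
      rw [← Real.norm_eq_abs]
      exact not_lt.mp (fun h => hg2 h)
    rw [hadef, hbdef]
    exact aux_center_bound hσ0sq hq hε.le n (γn n ω) (σ2n n ω) (hγnonneg n ω) (hσpos n ω)
      hγg (hδdef ▸ hσg) hc1 hc2 hc3 hn
  have hincl1 : E ⊆ Z n ⁻¹' Set.Icc (a-ε) (b+ε) ∪ (B1 ∪ B2) := by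
    intro ω hω
    by_cases hg1 : ω ∈ B1
    · exact Or.inr (Or.inl hg1)
    by_cases hg2 : ω ∈ B2
    · exact Or.inr (Or.inr hg2)
    left
    have hiff := aux_event_iff n hn (γn n ω) (σ2n n ω) (ψn n ω) ψ₀ q
      (hγnonneg n ω) (hσpos n ω)
    have hAB := hiff.mp hω
    obtain ⟨hA, hB⟩ := hgood ω hg1 hg2
    have hA' := abs_le.mp hA
    have hB' := abs_le.mp hB
    have hZω : Z n ω = Real.sqrt n * (ψn n ω - ψ₀) := rfl
    simp only [Set.mem_preimage, Set.mem_Icc, hZω]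
    constructor
    · linarith [hAB.1, hA'.1]
    · linarith [hAB.2, hB'.2]
  have hincl2 : Z n ⁻¹' Set.Icc (a+ε) (b-ε) ⊆ E ∪ (B1 ∪ B2) := by
    intro ω hω
    by_cases hg1 : ω ∈ B1
    · exact Or.inr (Or.inl hg1)
    by_cases hg2 : ω ∈ B2
    · exact Or.inr (Or.inr hg2)
    left
    have hiff := aux_event_iff n hn (γn n ω) (σ2n n ω) (ψn n ω) ψ₀ q
      (hγnonneg n ω) (hσpos n ω)
    obtain ⟨hA, hB⟩ := hgood ω hg1 hg2
    have hA' := abs_le.mp hA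
    have hB' := abs_le.mp hB
    have hZω : Z n ω = Real.sqrt n * (ψn n ω - ψ₀) := rfl
    simp only [Set.mem_preimage, Set.mem_Icc, hZω] at hω
    exact hiff.mpr ⟨by linarith [hω.1, hA'.2], by linarith [hω.2, hB'.1]⟩
  have hm1 := aux_meas_le3 P hincl1
  have hm2 := aux_meas_le3 P hincl2
  rw [Real.dist_eq, abs_sub_lt_iff]
  constructor
  · linarith
  · linarith
end
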